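/- arXiv:0812.3007 — 7 statements merged into one kernel-verified Lean document; each statement's English description precedes it below -/
import Mathlib

section
/- Let z ≥ 1 and suppose f : S → [1,∞) is a measurable function with Φ_{z,κ}[f](x) ≤ f(x) for all x ∈ S. Then the pointwise limit g(x) = lim_{k→∞} Φ_{z,κ}^k[f](x) exists, satisfies 1 ≤ g(x) ≤ f(x) for all x ∈ S, and is a fixed point: Φ_{z,κ}[g] = g. -/
open MeasureTheory Filter
open scoped ENNReal

/-- Extended exponential on `ℝ≥0∞`, with `eexp ⊤ = ⊤`. -/
noncomputable def eexp (t : ℝ≥0∞) : ℝ≥0∞ :=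
  if t = ⊤ then ⊤ else ENNReal.ofReal (Real.exp t.toReal)

/-- The nonlinear operator `Φ_{z,κ}[f](x) = z·exp(T_κ[f-1](x))`, acting on
functions `f : S → [1,∞]`, with value `⊤` when the integral diverges. -/
noncomputable def Phi {S : Type*} [MeasurableSpace S] (μ : Measure S)
    (κ : S → S → ℝ) (z : ℝ) (f : S → ℝ≥0∞) : S → ℝ≥0∞ :=
  fun x => ENNReal.ofReal z * eexp (∫⁻ y, ENNReal.ofReal (κ x y) * (f y - 1) ∂μ)

lemma eexp_mono : Monotone eexp := by
  intro s t hst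
  unfold eexp
  split_ifs with hs ht ht
  · exact le_top
  · exact absurd (top_le_iff.mp (hs ▸ hst)) ht
  · exact le_top
  · exact ENNReal.ofReal_le_ofReal (Real.exp_le_exp.mpr (ENNReal.toReal_mono ht hst))

lemma one_le_eexp (t : ℝ≥0∞) : 1 ≤ eexp t := by
  unfold eexp
  split_ifs with h
  · exact le_top
  · exact ENNReal.one_le_ofReal.mpr (Real.one_le_exp ENNReal.toReal_nonneg)

lemma eexp_ne_top {t : ℝ≥0∞} (h : t ≠ ⊤) : eexp t ≠ ⊤ := by
  unfold eexp; rw [if_neg h]; exact ENNReal.ofReal_ne_top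

lemma eexp_measurable : Measurable eexp := by
  unfold eexp
  exact Measurable.ite (by simpa using measurableSet_singleton (⊤ : ℝ≥0∞))
    measurable_const
    (ENNReal.measurable_ofReal.comp (Real.measurable_exp.comp ENNReal.measurable_toReal))

lemma eexp_continuousAt {a : ℝ≥0∞} (ha : a ≠ ⊤) : ContinuousAt eexp a := by
  have h1 : ContinuousAt (fun t : ℝ≥0∞ => ENNReal.ofReal (Real.exp t.toReal)) a := by
    exact (ENNReal.continuous_ofReal.continuousAt).comp
      ((Real.continuous_exp.continuousAt).comp
        (ENNReal.tendsto_toReal ha))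
  apply h1.congr
  have hopen : IsOpen {t : ℝ≥0∞ | t ≠ ⊤} := isOpen_ne
  filter_upwards [hopen.mem_nhds ha] with t ht
  simp only [eexp, if_neg ht]

section Main

variable {S : Type*} [MeasurableSpace S] (μ : Measure S) (κ : S → S → ℝ) (z : ℝ)

lemma phi_mono {f g : S → ℝ≥0∞} (h : ∀ x, f x ≤ g x) :
    ∀ x, Phi μ κ z f x ≤ Phi μ κ z g x := by
  intro x
  refine mul_le_mul_right (eexp_mono ?_) _
  exact lintegral_mono fun y => mul_le_mul_right (tsub_le_tsub_right (h y) 1) _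

lemma one_le_phi (hz : 1 ≤ z) (f : S → ℝ≥0∞) (x : S) : 1 ≤ Phi μ κ z f x := by
  calc (1 : ℝ≥0∞) = 1 * 1 := (one_mul 1).symm
  _ ≤ ENNReal.ofReal z * eexp _ :=
      mul_le_mul' (ENNReal.one_le_ofReal.mpr hz) (one_le_eexp _)

lemma phi_measurable [SFinite μ] (hκmeas : Measurable (Function.uncurry κ))
    {f : S → ℝ≥0∞} (hf : Measurable f) : Measurable (Phi μ κ z f) := by
  apply Measurable.const_mul
  apply eexp_measurable.comp
  apply Measurable.lintegral_prod_right'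
    (f := fun p : S × S => ENNReal.ofReal (κ p.1 p.2) * (f p.2 - 1))
  exact (hκmeas.ennreal_ofReal).mul ((hf.comp measurable_snd).sub measurable_const)

end Main

theorem stmt0 {S : Type*} [MeasurableSpace S] [MetricSpace S] [BorelSpace S]
    [TopologicalSpace.SeparableSpace S]
    (μ : Measure S) [IsProbabilityMeasure μ]
    (κ : S → S → ℝ) (hκmeas : Measurable (Function.uncurry κ))
    (hκsymm : ∀ x y, κ x y = κ y x) (hκnonneg : ∀ x y, 0 ≤ κ x y)
    (z : ℝ) (hz : 1 ≤ z)
    (f : S → ℝ≥0∞) (hfmeas : Measurable f)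
    (hf1 : ∀ x, 1 ≤ f x) (hffin : ∀ x, f x ≠ ⊤)
    (hPhif : ∀ x, Phi μ κ z f x ≤ f x) :
    ∃ g : S → ℝ≥0∞,
      (∀ x, Tendsto (fun k => (Phi μ κ z)^[k] f x) atTop (nhds (g x))) ∧
      (∀ x, 1 ≤ g x) ∧ (∀ x, g x ≤ f x) ∧
      Phi μ κ z g = g := by
  set F : ℕ → S → ℝ≥0∞ := fun k => (Phi μ κ z)^[k] f with hF
  -- Each iterate is dominated by f
  have hFle : ∀ k x, F k x ≤ f x := by
    intro k
    induction k with
    | zero => intro x; simp [hF]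
    | succ n ih =>
        intro x
        simp only [hF, Function.iterate_succ_apply']
        exact le_trans (phi_mono μ κ z ih x) (hPhif x)
  have hFanti : ∀ x, Antitone fun k => F k x := by
    intro x
    apply antitone_nat_of_succ_le
    intro n
    have : ∀ y, F (n + 1) y ≤ F n y := by
      intro y
      induction n generalizing y with
      | zero => simpa [hF] using hPhif y
      | succ m ih =>
          simp only [hF, Function.iterate_succ_apply']
          exact phi_mono μ κ z (fun w => by simpa [hF, Function.iterate_succ_apply'] using ih w) y
    exact this x
  have hF1 : ∀ k x, 1 ≤ F k x := by
    intro k x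
    cases k with
    | zero => exact hf1 x
    | succ n =>
        simp only [hF, Function.iterate_succ_apply']
        exact one_le_phi μ κ z hz _ x
  have hFmeas : ∀ k, Measurable (F k) := by
    intro k
    induction k with
    | zero => exact hfmeas
    | succ n ih =>
        simp only [hF, Function.iterate_succ_apply']
        exact phi_measurable μ κ z hκmeas ih
  set g : S → ℝ≥0∞ := fun x => ⨅ k, F k x with hg
  have htend : ∀ x, Tendsto (fun k => F k x) atTop (nhds (g x)) := fun x =>
    tendsto_atTop_iInf (hFanti x)
  have hgle : ∀ x, g x ≤ f x := fun x => iInf_le_of_le 0 (by simp [hF])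
  have hg1 : ∀ x, 1 ≤ g x := fun x => le_iInf fun k => hF1 k x
  -- finiteness of the basic integral
  have hI0 : ∀ x, (∫⁻ y, ENNReal.ofReal (κ x y) * (f y - 1) ∂μ) ≠ ⊤ := by
    intro x
    intro hcon
    have hzne : ENNReal.ofReal z ≠ 0 := by
      simp only [ne_eq, ENNReal.ofReal_eq_zero, not_le]; linarith
    have h1 : Phi μ κ z f x = ⊤ := by
      rw [Phi, hcon, show eexp ⊤ = ⊤ from if_pos rfl, ENNReal.mul_top hzne]
    exact hffin x (top_le_iff.mp (h1 ▸ hPhif x))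
  -- convergence of the integrals by dominated convergence
  have hInt : ∀ x, Tendsto
      (fun k => ∫⁻ y, ENNReal.ofReal (κ x y) * (F k y - 1) ∂μ) atTop
      (nhds (∫⁻ y, ENNReal.ofReal (κ x y) * (g y - 1) ∂μ)) := by
    intro x
    apply tendsto_lintegral_of_dominated_convergence
      (bound := fun y => ENNReal.ofReal (κ x y) * (f y - 1))
    · intro k
      exact ((hκmeas.comp (measurable_const.prodMk measurable_id)).ennreal_ofReal).mul
        ((hFmeas k).sub measurable_const)
    · intro k
      filter_upwards with y
      exact mul_le_mul_right (tsub_le_tsub_right (hFle k y) 1) _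
    · exact hI0 x
    · filter_upwards with y
      have h1 : Tendsto (fun k => F k y - 1) atTop (nhds (g y - 1)) := by
        apply ENNReal.Tendsto.sub (htend y) tendsto_const_nhds
        exact Or.inr (by simp)
      exact ENNReal.Tendsto.const_mul h1 (Or.inr ENNReal.ofReal_ne_top)
  refine ⟨g, htend, hg1, hgle, ?_⟩
  funext x
  have hIfin : (∫⁻ y, ENNReal.ofReal (κ x y) * (g y - 1) ∂μ) ≠ ⊤ := by
    refine ne_top_of_le_ne_top (hI0 x) (lintegral_mono fun y => ?_)
    exact mul_le_mul_right (tsub_le_tsub_right (hgle y) 1) _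
  have h2 : Tendsto (fun k => Phi μ κ z (F k) x) atTop (nhds (Phi μ κ z g x)) := by
    unfold Phi
    exact ENNReal.Tendsto.const_mul
      (((eexp_continuousAt hIfin).tendsto).comp (hInt x)) (Or.inr ENNReal.ofReal_ne_top)
  have h4 : (fun k => Phi μ κ z (F k) x) = fun k => F (k + 1) x :=
    funext fun k => by simp only [hF, Function.iterate_succ_apply']
  have h3 : Tendsto (fun k => F (k + 1) x) atTop (nhds (g x)) :=
    (htend x).comp (tendsto_add_atTop_nat 1)
  exact tendsto_nhds_unique (h4 ▸ h2) h3
end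

section
/- Assume inf_{x,y∈S} κ(x,y) > 0 and let z ≥ 1. If f : S → [1,∞] satisfies Φ_{z,κ}[f] = f, then either f(x) = ∞ for μ-almost every x, or f(x) < ∞ for μ-almost every x; moreover, in the latter case f ∈ L¹(S,μ). -/
open MeasureTheory Filter
open scoped ENNReal

theorem stmt2 {S : Type*} [MeasurableSpace S] [MetricSpace S] [BorelSpace S]
    [TopologicalSpace.SeparableSpace S]
    (μ : Measure S) [IsProbabilityMeasure μ]
    (κ : S → S → ℝ) (hκmeas : Measurable (Function.uncurry κ))
    (hκsymm : ∀ x y, κ x y = κ y x)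
    (hκinf : ∃ b : ℝ, 0 < b ∧ ∀ x y, b ≤ κ x y)
    (z : ℝ) (hz : 1 ≤ z)
    (f : S → ℝ≥0∞) (hfmeas : Measurable f) (hf1 : ∀ x, 1 ≤ f x)
    (hfix : ∀ x, Phi μ κ z f x = f x) :
    (∀ᵐ x ∂μ, f x = ⊤) ∨ ((∀ᵐ x ∂μ, f x ≠ ⊤) ∧ ∫⁻ x, f x ∂μ < ⊤) := by
  obtain ⟨b, hb, hbκ⟩ := hκinf
  by_cases hJ : ∫⁻ y, (f y - 1) ∂μ = ⊤
  · left
    refine Filter.Eventually.of_forall fun x => ?_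
    have hI : ∫⁻ y, ENNReal.ofReal (κ x y) * (f y - 1) ∂μ = ⊤ := by
      have hle : ∫⁻ y, ENNReal.ofReal b * (f y - 1) ∂μ ≤
          ∫⁻ y, ENNReal.ofReal (κ x y) * (f y - 1) ∂μ := by
        refine lintegral_mono fun y => mul_le_mul_left ?_ _
        exact ENNReal.ofReal_le_ofReal (hbκ x y)
      rw [lintegral_const_mul _ (show Measurable (fun y => f y - 1) from hfmeas.sub measurable_const), hJ,
        ENNReal.mul_top (by simpa using hb)] at hle
      exact top_le_iff.mp hle
    have := hfix x
    rw [Phi, hI] at this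
    rw [← this]
    simp [eexp, ENNReal.mul_top, ENNReal.ofReal_eq_zero, not_le.mpr (lt_of_lt_of_le one_pos hz)]
  · right
    constructor
    · have h := ae_lt_top (show Measurable (fun y => f y - 1) from hfmeas.sub measurable_const) hJ
      filter_upwards [h] with x hx
      intro hfx
      rw [hfx] at hx
      simp at hx
    · have hcongr : ∫⁻ x, f x ∂μ = ∫⁻ x, (f x - 1) + 1 ∂μ :=
        lintegral_congr fun x => (tsub_add_cancel_of_le (hf1 x)).symm
      rw [hcongr, lintegral_add_right _ measurable_const, lintegral_one, measure_univ]
      exact ENNReal.add_lt_top.mpr ⟨lt_top_iff_ne_top.mpr hJ, ENNReal.one_lt_top⟩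
end

section
/- Assume ‖T_κ‖_HS = λ < 1 and that ∫_S e^{a ψ(x)} dμ(x) < ∞ for some a > 0, where ψ(x) = (∫_S κ(x,y)² dμ(y))^{1/2}. Set λ₁ = λ + (1−λ)/2. Then there exists ε₀ > 0 such that for all 0 < ε < ε₀ and all x ∈ S, T_κ[e^{ε ψ} − 1](x) ≤ λ₁·ε·ψ(x). -/
open MeasureTheory Filter
open scoped ENNReal

lemma exp_sub_one_le' (t : ℝ) (ht : 0 ≤ t) : Real.exp t - 1 ≤ t + t ^ 2 * Real.exp t := by
  have h := Real.add_one_le_exp (-t)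
  have hh : Real.exp (-t) * Real.exp t = 1 := by rw [← Real.exp_add]; simp
  have h1 : Real.exp t - 1 ≤ t * Real.exp t := by
    nlinarith [mul_le_mul_of_nonneg_right h (Real.exp_pos t).le]
  nlinarith [mul_le_mul_of_nonneg_left h1 ht]

lemma quart_le_exp (s : ℝ) (hs : 0 ≤ s) : s ^ 4 ≤ 256 * Real.exp s := by
  have h4 : Real.exp s = Real.exp (s / 4) ^ 4 := by
    rw [← Real.exp_nat_mul]; ring_nf
  have h1 : (1 : ℝ) + s / 4 ≤ Real.exp (s / 4) := by
    linarith [Real.add_one_le_exp (s / 4)]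
  have h2 : (s / 4) ^ 4 ≤ Real.exp (s / 4) ^ 4 :=
    pow_le_pow_left₀ (by positivity) (by linarith) 4
  nlinarith [h2]

lemma rpow_two' (x : ℝ≥0∞) : x ^ (2 : ℝ) = x ^ 2 := by
  rw [← ENNReal.rpow_natCast x 2]; norm_num

lemma ofReal_sq (r : ℝ) (hr : 0 ≤ r) :
    ENNReal.ofReal r ^ (2 : ℝ) = ENNReal.ofReal (r ^ 2) := by
  rw [ENNReal.ofReal_rpow_of_nonneg hr (by norm_num)]
  congr 1
  rw [show (2:ℝ) = ((2:ℕ):ℝ) by norm_num, Real.rpow_natCast]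

theorem stmt4 {S : Type*} [MeasurableSpace S] [MetricSpace S] [BorelSpace S]
    [TopologicalSpace.SeparableSpace S]
    (μ : Measure S) [IsProbabilityMeasure μ]
    (κ : S → S → ℝ) (hκmeas : Measurable (Function.uncurry κ))
    (hκsymm : ∀ x y, κ x y = κ y x) (hκnonneg : ∀ x y, 0 ≤ κ x y)
    (hκ2 : ∀ x, Integrable (fun y => κ x y ^ 2) μ)
    (ψ : S → ℝ) (hψ : ∀ x, ψ x = Real.sqrt (∫ y, κ x y ^ 2 ∂μ))
    (lam : ℝ) (hlam0 : 0 ≤ lam) (hlam1 : lam < 1)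
    (hHS : (∫⁻ x, ∫⁻ y, ENNReal.ofReal (κ x y) ^ 2 ∂μ ∂μ) ^ ((1 : ℝ) / 2)
      = ENNReal.ofReal lam)
    (a : ℝ) (ha : 0 < a)
    (hexp : Integrable (fun x => Real.exp (a * ψ x)) μ) :
    ∃ ε₀ : ℝ, 0 < ε₀ ∧ ∀ ε : ℝ, 0 < ε → ε < ε₀ → ∀ x : S,
      ∫⁻ y, ENNReal.ofReal (κ x y) * ENNReal.ofReal (Real.exp (ε * ψ y) - 1) ∂μ
        ≤ ENNReal.ofReal ((lam + (1 - lam) / 2) * ε * ψ x) := by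
  have hψ0 : ∀ x, 0 ≤ ψ x := fun x => (hψ x) ▸ Real.sqrt_nonneg _
  have hψsq : ∀ x, ψ x ^ 2 = ∫ y, κ x y ^ 2 ∂μ := fun x => by
    rw [hψ x, Real.sq_sqrt (integral_nonneg fun y => sq_nonneg _)]
  -- measurability of ψ
  have hκ2meas : Measurable (fun p : S × S => κ p.1 p.2 ^ 2) := hκmeas.pow_const 2
  have hψmeas : Measurable ψ := by
    have h1 : StronglyMeasurable fun x => ∫ y, κ x y ^ 2 ∂μ :=
      hκ2meas.stronglyMeasurable.integral_prod_right'
    have : ψ = fun x => Real.sqrt (∫ y, κ x y ^ 2 ∂μ) := funext hψ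
    rw [this]
    exact Real.continuous_sqrt.measurable.comp h1.measurable
  -- the L² norm of κ x · is ψ x
  have hB : ∀ x, ∫⁻ y, ENNReal.ofReal (κ x y) ^ (2 : ℝ) ∂μ = ENNReal.ofReal (ψ x ^ 2) := by
    intro x
    rw [hψsq x, ofReal_integral_eq_lintegral_ofReal (hκ2 x)
      (Filter.Eventually.of_forall fun y => sq_nonneg _)]
    exact lintegral_congr fun y => ofReal_sq _ (hκnonneg x y)
  have hBr : ∀ x, (∫⁻ y, ENNReal.ofReal (κ x y) ^ (2 : ℝ) ∂μ) ^ ((1:ℝ)/2)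
      = ENNReal.ofReal (ψ x) := by
    intro x
    rw [hB x, ENNReal.ofReal_rpow_of_nonneg (sq_nonneg _) (by norm_num),
      ← Real.sqrt_eq_rpow, Real.sqrt_sq (hψ0 x)]
  -- the L² norm of ψ is lam
  have hC : (∫⁻ x, ENNReal.ofReal (ψ x) ^ (2 : ℝ) ∂μ) ^ ((1:ℝ)/2) = ENNReal.ofReal lam := by
    rw [← hHS]
    congr 1
    refine lintegral_congr fun x => ?_
    rw [ofReal_sq _ (hψ0 x), hψsq x,
      ofReal_integral_eq_lintegral_ofReal (hκ2 x)
        (Filter.Eventually.of_forall fun y => sq_nonneg _)]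
    exact lintegral_congr fun y => ENNReal.ofReal_pow (hκnonneg x y) 2
  -- constants
  set C : ℝ := 4096 / a ^ 4 with hCdef
  have hC0 : 0 < C := by positivity
  set I : ℝ := ∫ x, Real.exp (a * ψ x) ∂μ with hIdef
  have hI0 : 0 ≤ I := integral_nonneg fun x => (Real.exp_pos _).le
  set δ : ℝ := Real.sqrt (C * I) with hδdef
  have hδ0 : 0 ≤ δ := Real.sqrt_nonneg _
  refine ⟨min (a / 4) ((1 - lam) / (2 * (δ + 1))),
    lt_min (by positivity) (div_pos (by linarith) (by positivity)),
    fun ε hε hεlt x => ?_⟩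
  have hεa : ε ≤ a / 4 := le_of_lt (lt_of_lt_of_le hεlt (min_le_left _ _))
  have hεδ : ε * δ ≤ (1 - lam) / 2 := by
    have h1 : ε < (1 - lam) / (2 * (δ + 1)) := lt_of_lt_of_le hεlt (min_le_right _ _)
    have h2 : ε * (2 * (δ + 1)) < 1 - lam := (lt_div_iff₀ (by positivity)).mp h1
    nlinarith [hε, hδ0]
  -- measurability for this x
  have hκx : Measurable fun y => ENNReal.ofReal (κ x y) :=
    (hκmeas.comp measurable_prodMk_left).ennreal_ofReal
  have hψE : Measurable fun y => ENNReal.ofReal (ψ y) := hψmeas.ennreal_ofReal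
  have hg2r : Measurable fun y => ψ y ^ 2 * Real.exp (ε * ψ y) :=
    (hψmeas.pow_const 2).mul (measurable_const.mul hψmeas).exp
  have hg2 : Measurable fun y => ENNReal.ofReal (ψ y ^ 2 * Real.exp (ε * ψ y)) :=
    hg2r.ennreal_ofReal
  have hconj : Real.HolderConjugate 2 2 := Real.HolderConjugate.two_two
  -- step 1 : pointwise bound
  have step1 : ∫⁻ y, ENNReal.ofReal (κ x y) * ENNReal.ofReal (Real.exp (ε * ψ y) - 1) ∂μ
      ≤ (∫⁻ y, ENNReal.ofReal ε * (ENNReal.ofReal (κ x y) * ENNReal.ofReal (ψ y)) ∂μ)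
        + ∫⁻ y, ENNReal.ofReal (ε ^ 2) *
            (ENNReal.ofReal (κ x y) * ENNReal.ofReal (ψ y ^ 2 * Real.exp (ε * ψ y))) ∂μ := by
    rw [← lintegral_add_left (f := fun y => ENNReal.ofReal ε * (ENNReal.ofReal (κ x y) * ENNReal.ofReal (ψ y)))
      (measurable_const.mul (hκx.mul hψE))]
    refine lintegral_mono fun y => ?_
    have ht : 0 ≤ ε * ψ y := mul_nonneg hε.le (hψ0 y)
    have h1 := exp_sub_one_le' _ ht
    have key : ENNReal.ofReal (Real.exp (ε * ψ y) - 1)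
        ≤ ENNReal.ofReal (ε * ψ y) + ENNReal.ofReal (ε ^ 2 * (ψ y ^ 2 * Real.exp (ε * ψ y))) := by
      refine le_trans (ENNReal.ofReal_le_ofReal ?_) (ENNReal.ofReal_add ht (by positivity)).le
      nlinarith [h1]
    calc ENNReal.ofReal (κ x y) * ENNReal.ofReal (Real.exp (ε * ψ y) - 1)
        ≤ ENNReal.ofReal (κ x y) * (ENNReal.ofReal (ε * ψ y)
            + ENNReal.ofReal (ε ^ 2 * (ψ y ^ 2 * Real.exp (ε * ψ y)))) :=
          mul_le_mul_right key _
      _ = ENNReal.ofReal ε * (ENNReal.ofReal (κ x y) * ENNReal.ofReal (ψ y))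
            + ENNReal.ofReal (ε ^ 2) *
              (ENNReal.ofReal (κ x y) * ENNReal.ofReal (ψ y ^ 2 * Real.exp (ε * ψ y))) := by
          rw [mul_add, ENNReal.ofReal_mul hε.le,
            ENNReal.ofReal_mul (by positivity : (0:ℝ) ≤ ε ^ 2)]
          ring
  -- Cauchy-Schwarz for the first term
  have csA : ∫⁻ y, ENNReal.ofReal (κ x y) * ENNReal.ofReal (ψ y) ∂μ
      ≤ ENNReal.ofReal (ψ x) * ENNReal.ofReal lam := by
    calc ∫⁻ y, ENNReal.ofReal (κ x y) * ENNReal.ofReal (ψ y) ∂μ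
        ≤ (∫⁻ y, ENNReal.ofReal (κ x y) ^ (2:ℝ) ∂μ) ^ ((1:ℝ)/2)
            * (∫⁻ y, ENNReal.ofReal (ψ y) ^ (2:ℝ) ∂μ) ^ ((1:ℝ)/2) :=
          ENNReal.lintegral_mul_le_Lp_mul_Lq μ hconj hκx.aemeasurable hψE.aemeasurable
      _ = ENNReal.ofReal (ψ x) * ENNReal.ofReal lam := by rw [hBr x, hC]
  -- Cauchy-Schwarz + exponential moment for the second term
  have hG : ∫⁻ y, ENNReal.ofReal (ψ y ^ 2 * Real.exp (ε * ψ y)) ^ (2:ℝ) ∂μ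
      ≤ ENNReal.ofReal (C * I) := by
    have hCI : ENNReal.ofReal (C * I) = ∫⁻ y, ENNReal.ofReal (C * Real.exp (a * ψ y)) ∂μ := by
      rw [hIdef, ← integral_const_mul,
        ofReal_integral_eq_lintegral_ofReal (hexp.const_mul C)
          (Filter.Eventually.of_forall fun y => mul_nonneg hC0.le (Real.exp_pos _).le)]
    rw [hCI]
    refine lintegral_mono fun y => ?_
    rw [ofReal_sq _ (by positivity)]
    refine ENNReal.ofReal_le_ofReal ?_
    have hs := quart_le_exp (a / 2 * ψ y) (mul_nonneg (by positivity) (hψ0 y))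
    have hexple : Real.exp (ε * ψ y) ^ 2 ≤ Real.exp (a / 2 * ψ y) := by
      rw [← Real.exp_nat_mul]
      refine Real.exp_le_exp.mpr ?_
      push_cast
      nlinarith [hψ0 y, hεa]
    have hq : ψ y ^ 4 ≤ C * Real.exp (a / 2 * ψ y) := by
      have ha4 : (a / 2) ^ 4 * ψ y ^ 4 ≤ 256 * Real.exp (a / 2 * ψ y) := by
        nlinarith [hs]
      rw [hCdef]
      rw [div_mul_eq_mul_div, le_div_iff₀ (pow_pos ha 4)]
      nlinarith [ha4]
    have hee : Real.exp (a / 2 * ψ y) * Real.exp (a / 2 * ψ y) = Real.exp (a * ψ y) := by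
      rw [← Real.exp_add]; ring_nf
    calc (ψ y ^ 2 * Real.exp (ε * ψ y)) ^ 2 = ψ y ^ 4 * Real.exp (ε * ψ y) ^ 2 := by ring
      _ ≤ (C * Real.exp (a / 2 * ψ y)) * Real.exp (a / 2 * ψ y) := by
          refine mul_le_mul hq hexple (by positivity) (by positivity)
      _ = C * Real.exp (a * ψ y) := by rw [mul_assoc, hee]
  have csB : ∫⁻ y, ENNReal.ofReal (κ x y) * ENNReal.ofReal (ψ y ^ 2 * Real.exp (ε * ψ y)) ∂μ
      ≤ ENNReal.ofReal (ψ x) * ENNReal.ofReal δ := by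
    calc ∫⁻ y, ENNReal.ofReal (κ x y) * ENNReal.ofReal (ψ y ^ 2 * Real.exp (ε * ψ y)) ∂μ
        ≤ (∫⁻ y, ENNReal.ofReal (κ x y) ^ (2:ℝ) ∂μ) ^ ((1:ℝ)/2)
            * (∫⁻ y, ENNReal.ofReal (ψ y ^ 2 * Real.exp (ε * ψ y)) ^ (2:ℝ) ∂μ) ^ ((1:ℝ)/2) :=
          ENNReal.lintegral_mul_le_Lp_mul_Lq μ hconj hκx.aemeasurable hg2.aemeasurable
      _ ≤ ENNReal.ofReal (ψ x) * ENNReal.ofReal (C * I) ^ ((1:ℝ)/2) := by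
          rw [hBr x]
          exact mul_le_mul_right (ENNReal.rpow_le_rpow hG (by norm_num)) _
      _ = ENNReal.ofReal (ψ x) * ENNReal.ofReal δ := by
          rw [ENNReal.ofReal_rpow_of_nonneg (by positivity) (by norm_num),
            ← Real.sqrt_eq_rpow, hδdef]
  -- combine
  refine step1.trans ?_
  rw [lintegral_const_mul _ (f := fun y => ENNReal.ofReal (κ x y) * ENNReal.ofReal (ψ y)) (hκx.mul hψE),
    lintegral_const_mul _
      (f := fun y => ENNReal.ofReal (κ x y) * ENNReal.ofReal (ψ y ^ 2 * Real.exp (ε * ψ y))) (hκx.mul hg2)]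
  calc ENNReal.ofReal ε * (∫⁻ y, ENNReal.ofReal (κ x y) * ENNReal.ofReal (ψ y) ∂μ)
        + ENNReal.ofReal (ε ^ 2) *
          (∫⁻ y, ENNReal.ofReal (κ x y) * ENNReal.ofReal (ψ y ^ 2 * Real.exp (ε * ψ y)) ∂μ)
      ≤ ENNReal.ofReal ε * (ENNReal.ofReal (ψ x) * ENNReal.ofReal lam)
        + ENNReal.ofReal (ε ^ 2) * (ENNReal.ofReal (ψ x) * ENNReal.ofReal δ) :=
        add_le_add (mul_le_mul_right csA _) (mul_le_mul_right csB _)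
    _ = ENNReal.ofReal (ε * (ψ x * lam)) + ENNReal.ofReal (ε ^ 2 * (ψ x * δ)) := by
        rw [ENNReal.ofReal_mul hε.le, ENNReal.ofReal_mul (sq_nonneg ε),
          ENNReal.ofReal_mul (hψ0 x), ENNReal.ofReal_mul (hψ0 x)]
    _ ≤ ENNReal.ofReal ((lam + (1 - lam) / 2) * ε * ψ x) := by
        rw [← ENNReal.ofReal_add (mul_nonneg hε.le (mul_nonneg (hψ0 x) hlam0))
          (mul_nonneg (sq_nonneg ε) (mul_nonneg (hψ0 x) hδ0))]
        refine ENNReal.ofReal_le_ofReal ?_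
        nlinarith [mul_le_mul_of_nonneg_right hεδ (mul_nonneg hε.le (hψ0 x)), hψ0 x, hε.le]
end

section
/- Assume inf_{x,y∈S} κ(x,y) > 0 and ∫_S κ(x,y) dμ(y) < ∞ for every x ∈ S. If ‖T_κ‖ ≥ 1 then r*_κ = 1; that is, for no z > 1 does the equation g = z·e^{T_κ[g−1]} have a μ-a.e. finite measurable solution g ≥ 1. -/
open MeasureTheory Filter
open scoped ENNReal

/-- The `L²(μ)` operator norm of the integral operator `T_κ`. -/
noncomputable def opNorm {S : Type*} [MeasurableSpace S] (μ : Measure S)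
    (κ : S → S → ℝ) : ℝ≥0∞ :=
  ⨆ (f : S → ℝ≥0∞) (_ : Measurable f) (_ : (∫⁻ x, f x ^ 2 ∂μ) ^ ((1 : ℝ) / 2) ≤ 1),
    (∫⁻ x, (∫⁻ y, ENNReal.ofReal (κ x y) * f y ∂μ) ^ 2 ∂μ) ^ ((1 : ℝ) / 2)

/-- `r*_κ`: the supremum of the set of `z ≥ 1` for which the equation
`g = z·e^{T_κ[g−1]}` has a `μ`-a.e. finite measurable solution `g ≥ 1`. -/
noncomputable def rstar {S : Type*} [MeasurableSpace S] (μ : Measure S)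
    (κ : S → S → ℝ) : ℝ :=
  sSup {z : ℝ | 1 ≤ z ∧ ∃ g : S → ℝ≥0∞, Measurable g ∧ (∀ x, 1 ≤ g x) ∧
    (∀ᵐ x ∂μ, g x ≠ ⊤) ∧ (∀ᵐ x ∂μ, Phi μ κ z g x = g x)}

private lemma sqrt_mul_self' (c : ℝ≥0∞) : (c * c) ^ ((1:ℝ)/2) = c := by
  rw [← pow_two, ← ENNReal.rpow_natCast, ← ENNReal.rpow_mul]
  norm_num

private lemma sqrt_rpow_two (a : ℝ≥0∞) : (a ^ ((1:ℝ)/2)) ^ (2:ℝ) = a := by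
  rw [← ENNReal.rpow_mul]
  norm_num

private lemma sqrt_pow_two (a : ℝ≥0∞) : (a ^ ((1:ℝ)/2)) ^ (2:ℕ) = a := by
  rw [← ENNReal.rpow_natCast, ← ENNReal.rpow_mul]
  norm_num

theorem stmt9 {S : Type*} [MeasurableSpace S] [MetricSpace S] [BorelSpace S]
    [TopologicalSpace.SeparableSpace S]
    (μ : Measure S) [IsProbabilityMeasure μ]
    (κ : S → S → ℝ) (hκmeas : Measurable (Function.uncurry κ))
    (hκsymm : ∀ x y, κ x y = κ y x)
    (hκinf : ∃ b : ℝ, 0 < b ∧ ∀ x y, b ≤ κ x y)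
    (hR : ∀ x, Integrable (fun y => κ x y) μ)
    (hnorm : 1 ≤ opNorm μ κ) :
    rstar μ κ = 1 ∧
    ∀ z : ℝ, 1 < z → ¬ ∃ g : S → ℝ≥0∞, Measurable g ∧ (∀ x, 1 ≤ g x) ∧
      (∀ᵐ x ∂μ, g x ≠ ⊤) ∧ (∀ᵐ x ∂μ, Phi μ κ z g x = g x) := by
  have hker : Measurable (fun p : S × S => ENNReal.ofReal (κ p.1 p.2)) :=
    ENNReal.measurable_ofReal.comp hκmeas
  have hTm : ∀ u : S → ℝ≥0∞, Measurable u →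
      Measurable (fun x => ∫⁻ y, ENNReal.ofReal (κ x y) * u y ∂μ) := fun u hu =>
    Measurable.lintegral_prod_right' (hker.mul (hu.comp measurable_snd))
  have key : ∀ z : ℝ, 1 < z → ¬ ∃ g : S → ℝ≥0∞, Measurable g ∧ (∀ x, 1 ≤ g x) ∧
      (∀ᵐ x ∂μ, g x ≠ ⊤) ∧ (∀ᵐ x ∂μ, Phi μ κ z g x = g x) := by
    rintro z hz ⟨g, hgm, hg1, hgfin, hgfix⟩
    set f : S → ℝ≥0∞ := fun y => g y - 1 with hf_def
    have hfm : Measurable f := hgm.sub measurable_const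
    set T : (S → ℝ≥0∞) → S → ℝ≥0∞ :=
      fun u x => ∫⁻ y, ENNReal.ofReal (κ x y) * u y ∂μ with hT_def
    have hz0 : (0:ℝ) < z := lt_trans one_pos hz
    have hzne : ENNReal.ofReal z ≠ 0 := by
      simp [ENNReal.ofReal_eq_zero, not_le, hz0]
    have hznet : ENNReal.ofReal z ≠ ⊤ := ENNReal.ofReal_ne_top
    have hkx : ∀ x : S, Measurable fun y => ENNReal.ofReal (κ x y) := fun x =>
      hker.comp measurable_prodMk_left
    -- key a.e. consequences of the fixed-point equation
    have hae : ∀ᵐ x ∂μ, ENNReal.ofReal z * T f x ≤ f x ∧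
        ENNReal.ofReal (z - 1) ≤ f x ∧ f x ≠ ⊤ := by
      filter_upwards [hgfin, hgfix] with x hfin hfix
      have hfix' : ENNReal.ofReal z * eexp (T f x) = g x := hfix
      have hTne : T f x ≠ ⊤ := by
        intro htop
        apply hfin
        rw [← hfix', htop]
        simp [eexp, ENNReal.mul_top hzne]
      set t : ℝ := (T f x).toReal with ht_def
      have ht0 : 0 ≤ t := ENNReal.toReal_nonneg
      have hTt : T f x = ENNReal.ofReal t := (ENNReal.ofReal_toReal hTne).symm
      have hgx : g x = ENNReal.ofReal (z * Real.exp t) := by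
        rw [← hfix']
        simp only [eexp, if_neg hTne]
        rw [← ENNReal.ofReal_mul hz0.le]
      have hfx : f x = ENNReal.ofReal (z * Real.exp t - 1) := by
        simp only [hf_def, hgx]
        rw [← ENNReal.ofReal_one, ← ENNReal.ofReal_sub _ zero_le_one]
      have hexp : z * t + (z - 1) ≤ z * Real.exp t - 1 := by
        have := Real.add_one_le_exp t
        nlinarith
      refine ⟨?_, ?_, ?_⟩
      · rw [hTt, ← ENNReal.ofReal_mul hz0.le, hfx]
        calc ENNReal.ofReal (z * t) ≤ ENNReal.ofReal (z * t + (z - 1)) :=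
          ENNReal.ofReal_le_ofReal (by linarith)
        _ ≤ _ := ENNReal.ofReal_le_ofReal hexp
      · rw [hfx]
        refine ENNReal.ofReal_le_ofReal ?_
        nlinarith [Real.add_one_le_exp t]
      · rw [hfx]; exact ENNReal.ofReal_ne_top
    have hfpos : ∀ᵐ x ∂μ, f x ≠ 0 := by
      filter_upwards [hae] with x ⟨_, h2, _⟩
      intro h0
      rw [h0, le_zero_iff, ENNReal.ofReal_eq_zero] at h2
      linarith
    have hffin : ∀ᵐ x ∂μ, f x ≠ ⊤ := by
      filter_upwards [hae] with x hx using hx.2.2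
    have hTle : ∀ᵐ x ∂μ, T f x ≤ (ENNReal.ofReal z)⁻¹ * f x := by
      filter_upwards [hae] with x hx
      calc T f x = (ENNReal.ofReal z)⁻¹ * (ENNReal.ofReal z * T f x) := by
            rw [← mul_assoc, ENNReal.inv_mul_cancel hzne hznet, one_mul]
      _ ≤ (ENNReal.ofReal z)⁻¹ * f x := mul_le_mul_right hx.1 _
    -- the operator norm bound
    have hop : opNorm μ κ ≤ (ENNReal.ofReal z)⁻¹ := by
      rw [opNorm]
      refine iSup_le fun h => iSup_le fun hm => iSup_le fun hb => ?_
      set q : S → ℝ≥0∞ := fun y => h y ^ 2 / f y with hq_def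
      have hqm : Measurable q := (hm.pow_const 2).div hfm
      have hh2 : ∫⁻ y, h y ^ 2 ∂μ ≤ 1 := by
        have := ENNReal.rpow_le_rpow hb (le_of_lt two_pos)
        rwa [sqrt_rpow_two, ENNReal.one_rpow] at this
      -- Step A: Cauchy-Schwarz pointwise
      have stepA : ∀ x, T h x ≤ (T f x) ^ ((1:ℝ)/2) * (T q x) ^ ((1:ℝ)/2) := by
        intro x
        have hA : ∀ᵐ y ∂μ, ENNReal.ofReal (κ x y) * h y ≤
            ((fun y => (ENNReal.ofReal (κ x y) * f y) ^ ((1:ℝ)/2)) *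
              (fun y => (ENNReal.ofReal (κ x y) * q y) ^ ((1:ℝ)/2))) y := by
          filter_upwards [hfpos, hffin] with y h0 ht
          have : (ENNReal.ofReal (κ x y) * f y) ^ ((1:ℝ)/2) *
              (ENNReal.ofReal (κ x y) * q y) ^ ((1:ℝ)/2)
              = ((ENNReal.ofReal (κ x y) * f y) * (ENNReal.ofReal (κ x y) * q y))
                ^ ((1:ℝ)/2) :=
            (ENNReal.mul_rpow_of_nonneg _ _ (by norm_num)).symm
          simp only [Pi.mul_apply]
          rw [this]
          have hprod : (ENNReal.ofReal (κ x y) * f y) * (ENNReal.ofReal (κ x y) * q y)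
              = (ENNReal.ofReal (κ x y) * h y) * (ENNReal.ofReal (κ x y) * h y) := by
            have : f y * q y = h y ^ 2 := by
              rw [mul_comm]
              exact ENNReal.div_mul_cancel h0 ht
            calc (ENNReal.ofReal (κ x y) * f y) * (ENNReal.ofReal (κ x y) * q y)
                = (ENNReal.ofReal (κ x y) * ENNReal.ofReal (κ x y)) * (f y * q y) := by
                  ring
            _ = (ENNReal.ofReal (κ x y) * h y) * (ENNReal.ofReal (κ x y) * h y) := by
                  rw [this]; ring
          rw [hprod, sqrt_mul_self']
        calc T h x ≤ ∫⁻ y, ((fun y => (ENNReal.ofReal (κ x y) * f y) ^ ((1:ℝ)/2)) *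
              (fun y => (ENNReal.ofReal (κ x y) * q y) ^ ((1:ℝ)/2))) y ∂μ :=
            lintegral_mono_ae hA
        _ ≤ (∫⁻ y, ((ENNReal.ofReal (κ x y) * f y) ^ ((1:ℝ)/2)) ^ (2:ℝ) ∂μ) ^ ((1:ℝ)/2) *
            (∫⁻ y, ((ENNReal.ofReal (κ x y) * q y) ^ ((1:ℝ)/2)) ^ (2:ℝ) ∂μ) ^ ((1:ℝ)/2) :=
            ENNReal.lintegral_mul_le_Lp_mul_Lq μ ⟨by norm_num, by norm_num, by norm_num⟩
              (((hkx x).mul hfm).pow_const ((1:ℝ)/2)).aemeasurable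
              (((hkx x).mul hqm).pow_const ((1:ℝ)/2)).aemeasurable
        _ = (T f x) ^ ((1:ℝ)/2) * (T q x) ^ ((1:ℝ)/2) := by
            simp only [sqrt_rpow_two]; rfl
      -- Step B: square it
      have stepB : ∀ x, (T h x) ^ (2:ℕ) ≤ T f x * T q x := by
        intro x
        calc (T h x) ^ (2:ℕ) ≤ ((T f x) ^ ((1:ℝ)/2) * (T q x) ^ ((1:ℝ)/2)) ^ (2:ℕ) := by
              rw [pow_two, pow_two]; exact mul_le_mul' (stepA x) (stepA x)
        _ = T f x * T q x := by rw [mul_pow, sqrt_pow_two, sqrt_pow_two]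
      -- Step C/D/E: integrate and use symmetry
      have stepC : ∫⁻ x, (T h x) ^ (2:ℕ) ∂μ ≤
          (ENNReal.ofReal z)⁻¹ * ∫⁻ x, f x * T q x ∂μ := by
        calc ∫⁻ x, (T h x) ^ (2:ℕ) ∂μ ≤ ∫⁻ x, T f x * T q x ∂μ :=
            lintegral_mono stepB
        _ ≤ ∫⁻ x, (ENNReal.ofReal z)⁻¹ * (f x * T q x) ∂μ := by
            refine lintegral_mono_ae ?_
            filter_upwards [hTle] with x hx
            rw [← mul_assoc]
            exact mul_le_mul_left hx _
        _ = (ENNReal.ofReal z)⁻¹ * ∫⁻ x, f x * T q x ∂μ :=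
            lintegral_const_mul _ (hfm.mul (hTm q hqm))

      have stepD : ∫⁻ x, f x * T q x ∂μ = ∫⁻ y, q y * T f y ∂μ := by
        have h1 : ∀ x, f x * T q x = ∫⁻ y, f x * (ENNReal.ofReal (κ x y) * q y) ∂μ := by
          intro x
          exact (lintegral_const_mul _ ((hkx x).mul hqm)).symm
        have h2 : ∀ y, q y * T f y = ∫⁻ x, f x * (ENNReal.ofReal (κ x y) * q y) ∂μ := by
          intro y
          have : ∀ x, f x * (ENNReal.ofReal (κ x y) * q y)
              = q y * (ENNReal.ofReal (κ y x) * f x) := by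
            intro x; rw [hκsymm x y]; ring
          simp only [this]
          exact (lintegral_const_mul _ ((hkx y).mul hfm)).symm
        simp only [h1, h2]
        exact lintegral_lintegral_swap
          (((hfm.comp measurable_fst).mul (hker.mul (hqm.comp measurable_snd))).aemeasurable)
      have e1 : ∫⁻ y, q y * T f y ∂μ ≤ ∫⁻ y, (ENNReal.ofReal z)⁻¹ * h y ^ 2 ∂μ := by
        refine lintegral_mono_ae ?_
        filter_upwards [hTle, hfpos, hffin] with y hy h0 ht
        have hqf : q y * f y = h y ^ 2 := ENNReal.div_mul_cancel h0 ht
        calc q y * T f y ≤ q y * ((ENNReal.ofReal z)⁻¹ * f y) := mul_le_mul_right hy _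
        _ = (ENNReal.ofReal z)⁻¹ * (q y * f y) := by ring
        _ = (ENNReal.ofReal z)⁻¹ * h y ^ 2 := by rw [hqf]
      have e2 : ∫⁻ y, (ENNReal.ofReal z)⁻¹ * h y ^ 2 ∂μ
          = (ENNReal.ofReal z)⁻¹ * ∫⁻ y, h y ^ 2 ∂μ :=
        lintegral_const_mul _ (hm.pow_const 2)
      have stepE : ∫⁻ y, q y * T f y ∂μ ≤ (ENNReal.ofReal z)⁻¹ * 1 := by
        refine le_trans e1 ?_
        rw [e2]
        exact mul_le_mul_right hh2 _
      have hfinal : ∫⁻ x, (T h x) ^ (2:ℕ) ∂μ ≤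
          (ENNReal.ofReal z)⁻¹ * (ENNReal.ofReal z)⁻¹ := by
        calc ∫⁻ x, (T h x) ^ (2:ℕ) ∂μ ≤ (ENNReal.ofReal z)⁻¹ * ∫⁻ x, f x * T q x ∂μ :=
            stepC
        _ = (ENNReal.ofReal z)⁻¹ * ∫⁻ y, q y * T f y ∂μ := by rw [stepD]
        _ ≤ (ENNReal.ofReal z)⁻¹ * ((ENNReal.ofReal z)⁻¹ * 1) := mul_le_mul_right stepE _
        _ = (ENNReal.ofReal z)⁻¹ * (ENNReal.ofReal z)⁻¹ := by rw [mul_one]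
      calc (∫⁻ x, (∫⁻ y, ENNReal.ofReal (κ x y) * h y ∂μ) ^ 2 ∂μ) ^ ((1:ℝ)/2)
          ≤ ((ENNReal.ofReal z)⁻¹ * (ENNReal.ofReal z)⁻¹) ^ ((1:ℝ)/2) :=
            ENNReal.rpow_le_rpow hfinal (by norm_num)
      _ = (ENNReal.ofReal z)⁻¹ := sqrt_mul_self' _
    have hlt : (ENNReal.ofReal z)⁻¹ < 1 := by
      rw [ENNReal.inv_lt_one]
      rw [← ENNReal.ofReal_one]
      exact ENNReal.ofReal_lt_ofReal_iff hz0 |>.mpr hz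
    exact absurd (le_trans hnorm hop) (not_le.mpr hlt)
  refine ⟨?_, key⟩
  -- rstar = 1
  have hone : (1:ℝ) ∈ {z : ℝ | 1 ≤ z ∧ ∃ g : S → ℝ≥0∞, Measurable g ∧ (∀ x, 1 ≤ g x) ∧
      (∀ᵐ x ∂μ, g x ≠ ⊤) ∧ (∀ᵐ x ∂μ, Phi μ κ z g x = g x)} := by
    refine ⟨le_refl 1, fun _ => 1, measurable_const, fun _ => le_refl 1,
      ae_of_all _ (fun _ => ENNReal.one_ne_top), ae_of_all _ (fun x => ?_)⟩
    simp [Phi, eexp]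
  have hub : ∀ w ∈ {z : ℝ | 1 ≤ z ∧ ∃ g : S → ℝ≥0∞, Measurable g ∧ (∀ x, 1 ≤ g x) ∧
      (∀ᵐ x ∂μ, g x ≠ ⊤) ∧ (∀ᵐ x ∂μ, Phi μ κ z g x = g x)}, w ≤ 1 := by
    rintro w ⟨hw1, hwg⟩
    by_contra hw
    exact key w (not_le.mp hw) hwg
  rw [rstar]
  exact le_antisymm (csSup_le ⟨1, hone⟩ hub) (le_csSup ⟨1, hub⟩ hone)
end

section
/- Let h : S → (1,∞) be a μ-a.e. finite measurable function with h = e^{T_κ[h−1]} on S and h* := inf_{x∈S} h(x) > 1. Then there exist ε ∈ (0,1) and z > 1 such that the function H = ε + (1−ε)h satisfies z·e^{T_κ[H−1]}(x) ≤ H(x) for all x ∈ S; in fact one may take any ε ∈ (0,1) and z = (ε + (1−ε)h*)/(h*)^{1−ε}. -/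
open MeasureTheory Filter
open scoped ENNReal

private lemma bern {ε r : ℝ} (hε : 0 < ε) (hε1 : ε < 1) (hr : 1 ≤ r) :
    r ^ (1 - ε) ≤ ε + (1 - ε) * r := by
  have := Real.geom_mean_le_arith_mean2_weighted (w₁ := ε) (w₂ := 1 - ε) (p₁ := 1) (p₂ := r)
    hε.le (by linarith) zero_le_one (by linarith) (by ring)
  simpa using this

private lemma bern_strict {ε a : ℝ} (hε : 0 < ε) (hε1 : ε < 1) (ha : 1 < a) :
    a ^ (1 - ε) < ε + (1 - ε) * a := by
  set c := Real.sqrt a with hc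
  have hc1 : 1 < c := by
    rw [hc, show (1:ℝ) = Real.sqrt 1 by simp]
    exact Real.sqrt_lt_sqrt zero_le_one ha
  have hcsq : c ^ (2:ℕ) = a := Real.sq_sqrt (by linarith)
  have hb : c ^ (1 - ε) ≤ ε + (1 - ε) * c := bern hε hε1 hc1.le
  have hpos : 0 ≤ c ^ (1 - ε) := Real.rpow_nonneg (by linarith) _
  have key : a ^ (1 - ε) = (c ^ (1 - ε)) ^ (2:ℕ) := by
    rw [← hcsq, ← Real.rpow_natCast c 2, ← Real.rpow_natCast (c ^ (1-ε)) 2,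
      ← Real.rpow_mul (by linarith), ← Real.rpow_mul (by positivity)]
    ring_nf
  rw [key, ← hcsq]
  have hprod := mul_le_mul hb hb hpos (by nlinarith : (0:ℝ) ≤ ε + (1 - ε) * c)
  nlinarith [hprod, mul_pos (mul_pos hε (by linarith : (0:ℝ) < 1 - ε))
    (pow_pos (sub_pos.2 hc1) 2)]

theorem stmt12 {S : Type*} [MeasurableSpace S] [MetricSpace S] [BorelSpace S]
    [TopologicalSpace.SeparableSpace S]
    (μ : Measure S) [IsProbabilityMeasure μ]
    (κ : S → S → ℝ) (hκmeas : Measurable (Function.uncurry κ))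
    (hκsymm : ∀ x y, κ x y = κ y x) (hκnonneg : ∀ x y, 0 ≤ κ x y)
    (h : S → ℝ) (hhmeas : Measurable h) (hh1 : ∀ x, 1 < h x)
    (hhint : ∀ x, Integrable (fun y => κ x y * (h y - 1)) μ)
    (hheq : ∀ x, h x = Real.exp (∫ y, κ x y * (h y - 1) ∂μ))
    (hstar : ℝ) (hglb : IsGLB (Set.range h) hstar) (hstar1 : 1 < hstar) :
    (∃ ε : ℝ, 0 < ε ∧ ε < 1 ∧ ∃ z : ℝ, 1 < z ∧ ∀ x,
      z * Real.exp (∫ y, κ x y * ((ε + (1 - ε) * h y) - 1) ∂μ) ≤ ε + (1 - ε) * h x) ∧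
    (∀ ε : ℝ, 0 < ε → ε < 1 →
      1 < (ε + (1 - ε) * hstar) / hstar ^ (1 - ε) ∧
      ∀ x, ((ε + (1 - ε) * hstar) / hstar ^ (1 - ε)) *
          Real.exp (∫ y, κ x y * ((ε + (1 - ε) * h y) - 1) ∂μ)
        ≤ ε + (1 - ε) * h x) := by
  have hstar0 : (0:ℝ) < hstar := by linarith
  have main : ∀ ε : ℝ, 0 < ε → ε < 1 →
      1 < (ε + (1 - ε) * hstar) / hstar ^ (1 - ε) ∧
      ∀ x, ((ε + (1 - ε) * hstar) / hstar ^ (1 - ε)) *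
          Real.exp (∫ y, κ x y * ((ε + (1 - ε) * h y) - 1) ∂μ)
        ≤ ε + (1 - ε) * h x := by
    intro ε hε hε1
    have hapow : (0:ℝ) < hstar ^ (1 - ε) := Real.rpow_pos_of_pos hstar0 _
    have hz : 1 < (ε + (1 - ε) * hstar) / hstar ^ (1 - ε) :=
      (one_lt_div hapow).2 (bern_strict hε hε1 hstar1)
    refine ⟨hz, fun x => ?_⟩
    -- rewrite the integral
    have hint_eq : (∫ y, κ x y * ((ε + (1 - ε) * h y) - 1) ∂μ)
        = (1 - ε) * ∫ y, κ x y * (h y - 1) ∂μ := by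
      rw [← integral_const_mul]
      congr 1; ext y; ring
    have hexp : Real.exp (∫ y, κ x y * ((ε + (1 - ε) * h y) - 1) ∂μ)
        = (h x) ^ (1 - ε) := by
      rw [hint_eq, mul_comm, Real.exp_mul, ← hheq x]
    rw [hexp]
    -- now pure real inequality
    set t := h x with ht
    have hat : hstar ≤ t := hglb.1 ⟨x, rfl⟩
    have ht1 : 1 < t := hh1 x
    set r := t / hstar with hrdef
    have hr1 : 1 ≤ r := (one_le_div hstar0).2 hat
    have htr : t = hstar * r := by rw [hrdef]; field_simp [hstar0.ne']
    have htpow : t ^ (1 - ε) = hstar ^ (1 - ε) * r ^ (1 - ε) := by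
      rw [htr, Real.mul_rpow hstar0.le (by linarith)]
    have hR := bern hε hε1 hr1
    have hR1 : 1 ≤ r ^ (1 - ε) := Real.one_le_rpow hr1 (by linarith)
    have hRr : r ^ (1 - ε) ≤ r := by
      calc r ^ (1 - ε) ≤ ε + (1 - ε) * r := hR
        _ ≤ r := by nlinarith
    have key : (ε + (1 - ε) * hstar) * r ^ (1 - ε) ≤ ε + (1 - ε) * (hstar * r) := by
      have h1 : ε * (r - 1) ≤ r - r ^ (1 - ε) := by nlinarith
      have h2 : hstar * (ε * (r - 1)) ≤ hstar * (r - r ^ (1 - ε)) :=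
        mul_le_mul_of_nonneg_left h1 hstar0.le
      have h3 : ε * (r - 1) ≤ hstar * (ε * (r - 1)) :=
        le_mul_of_one_le_left (by nlinarith) hstar1.le
      have h4 := mul_le_mul_of_nonneg_left (h3.trans h2) (by linarith : (0:ℝ) ≤ 1 - ε)
      nlinarith [h4, mul_le_mul_of_nonneg_left hR hε.le]
    calc (ε + (1 - ε) * hstar) / hstar ^ (1 - ε) * t ^ (1 - ε)
        = (ε + (1 - ε) * hstar) * r ^ (1 - ε) := by
          rw [htpow]; field_simp
      _ ≤ ε + (1 - ε) * (hstar * r) := key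
      _ = ε + (1 - ε) * t := by rw [← htr]
  refine ⟨⟨1/2, by norm_num, by norm_num, _, (main (1/2) (by norm_num) (by norm_num)).1,
    (main (1/2) (by norm_num) (by norm_num)).2⟩, main⟩
end

section
/- For a constant c > 0 the following are equivalent: (a) there exist z > 1 and a finite real number g > 1 with g = z·e^{c(g−1)}; (b) the equation f = 1 − e^{−c f} has a strictly negative real solution f; (c) c < 1. -/
theorem stmt13 (c : ℝ) (hc : 0 < c) :
    ((∃ z : ℝ, 1 < z ∧ ∃ g : ℝ, 1 < g ∧ g = z * Real.exp (c * (g - 1))) ↔ c < 1) ∧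
    ((∃ f : ℝ, f < 0 ∧ f = 1 - Real.exp (-(c * f))) ↔ c < 1) := by
  have hc0 : c ≠ 0 := ne_of_gt hc
  constructor
  · constructor
    · rintro ⟨z, hz, g, hg, hgz⟩
      by_contra h
      push_neg at h
      have hne : c * (g - 1) ≠ 0 := by
        have : 0 < c * (g - 1) := mul_pos hc (by linarith)
        linarith
      have h1 : c * (g - 1) + 1 < Real.exp (c * (g - 1)) := Real.add_one_lt_exp hne
      have h2 : g ≤ c * (g - 1) + 1 := by nlinarith
      have h3 : 0 < Real.exp (c * (g - 1)) := Real.exp_pos _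
      nlinarith
    · intro h1
      have h2 : c < Real.exp (c - 1) := by
        have := Real.add_one_lt_exp (x := c - 1) (by linarith)
        linarith
      refine ⟨Real.exp (c - 1) / c, (one_lt_div hc).mpr h2, 1 / c, (one_lt_one_div hc h1), ?_⟩
      rw [div_mul_eq_mul_div, ← Real.exp_add]
      have : c - 1 + c * (1 / c - 1) = 0 := by field_simp; ring
      rw [this, Real.exp_zero]
  · constructor
    · rintro ⟨f, hf, hfe⟩
      by_contra h
      push_neg at h
      have hne : -(c * f) ≠ 0 := by
        have : 0 < -(c * f) := by nlinarith
        linarith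
      have h1 : -(c * f) + 1 < Real.exp (-(c * f)) := Real.add_one_lt_exp hne
      nlinarith
    · intro h1
      obtain ⟨a, ha⟩ : ∃ a : ℝ, a = -(4 * (1 - c) / c ^ 2 + 1) := ⟨_, rfl⟩
      obtain ⟨b, hb⟩ : ∃ b : ℝ, b = -((1 - c) / c) := ⟨_, rfl⟩
      have hbneg : b < 0 := by
        rw [hb]
        have : 0 < (1 - c) / c := div_pos (by linarith) hc
        linarith
      have hab : a ≤ b := by
        rw [ha, hb]
        have h4 : (1 - c) / c ≤ 4 * (1 - c) / c ^ 2 := by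
          rw [div_le_div_iff₀ hc (by positivity)]
          nlinarith [mul_pos (mul_pos (by linarith : (0:ℝ) < 1 - c) hc)
            (by linarith : (0:ℝ) < 4 - c)]
        linarith
      have hφb : 0 < 1 - Real.exp (-(c * b)) - b := by
        have hcb : -(c * b) = 1 - c := by rw [hb]; field_simp
        have h2 : Real.exp (1 - c) < 1 / c := by
          have h3 : c < Real.exp (c - 1) := by
            have := Real.add_one_lt_exp (x := c - 1) (by linarith)
            linarith
          rw [show (1 : ℝ) - c = -(c - 1) by ring, Real.exp_neg, inv_eq_one_div]
          exact one_div_lt_one_div_of_lt hc h3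
        have hb1 : b = 1 - 1 / c := by rw [hb]; field_simp; ring
        rw [hcb, hb1]; linarith
      have hφa : 1 - Real.exp (-(c * a)) - a < 0 := by
        have hApos : 0 < -a := by
          rw [ha]
          have : 0 < 4 * (1 - c) / c ^ 2 :=
            div_pos (by linarith) (by positivity)
          linarith
        have hx : 0 < -(c * a) := by nlinarith
        have hexp : (1 + -(c * a) / 2) ^ 2 ≤ Real.exp (-(c * a)) := by
          have h5 : Real.exp (-(c * a)) = Real.exp (-(c * a) / 2) ^ 2 := by
            rw [sq, ← Real.exp_add]; ring_nf
          have h6 : 1 + -(c * a) / 2 ≤ Real.exp (-(c * a) / 2) := by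
            have := Real.add_one_le_exp (-(c * a) / 2)
            linarith
          rw [h5]
          have h7 : (0:ℝ) ≤ 1 + -(c * a) / 2 := by linarith
          nlinarith
        have hA : -a = 4 * (1 - c) / c ^ 2 + 1 := by rw [ha]; ring
        have hgt : 1 - a < (1 + -(c * a) / 2) ^ 2 := by
          have hAc : c ^ 2 * (-a) = 4 * (1 - c) + c ^ 2 := by
            rw [hA]; field_simp
          have h8 : c ^ 2 * (-a) * (-a) = (4 * (1 - c) + c ^ 2) * (-a) := by
            rw [hAc]
          nlinarith [h8, hApos, mul_pos (mul_pos hc hc) hApos]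
        linarith [lt_of_lt_of_le hgt hexp]
      have hcont : ContinuousOn (fun x : ℝ => 1 - Real.exp (-(c * x)) - x) (Set.Icc a b) := by
        apply Continuous.continuousOn
        fun_prop
      have h0 : (0 : ℝ) ∈ Set.Icc (1 - Real.exp (-(c * a)) - a) (1 - Real.exp (-(c * b)) - b) :=
        ⟨le_of_lt hφa, le_of_lt hφb⟩
      obtain ⟨f, hfmem, hφf⟩ := intermediate_value_Icc hab hcont h0
      refine ⟨f, lt_of_le_of_lt hfmem.2 hbneg, ?_⟩
      have : 1 - Real.exp (-(c * f)) - f = 0 := hφf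
      linarith
end

section
/- Let S ⊆ {1,2,…} be countable, let μ be a probability measure on S, and let κ : S × S → (0,∞) satisfy inf κ > 0, ∫_S e^{a ψ(x)} dμ(x) < ∞ for some a > 0 where ψ(x) = (∑_{y∈S} κ(x,y)² μ(y))^{1/2}, ‖T_κ‖ < 1, and either (C1) sup κ < ∞ or (C3) κ is non-decreasing in each argument with κ(x,y) ≤ c₁·T_κ[1](x)·T_κ[1](y) for some c₁ > 0. For D ∈ S set M_D = ∑_{y≤D} μ(y), μ̂_D(y) = μ(y)/M_D for y ≤ D and μ̂_D(y) = 0 otherwise, c = M_D, and r̂*(D) = sup{z ≥ 1 : the equation f = z·exp(∑_{y≤D} c·κ(x,y)(f(y)−1) μ̂_D(y)) has an everywhere finite solution f ≥ 1}. Then r̂*(D) ≥ r*_κ for every D, r̂*(D) is non-increasing in D, and lim_{D→∞} r̂*(D) = r*_κ. -/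
open MeasureTheory Filter
open scoped ENNReal

/-- Variant of `r*` requiring an everywhere finite solution. -/
noncomputable def rstarAll {S : Type*} [MeasurableSpace S] (μ : Measure S)
    (κ : S → S → ℝ) : ℝ :=
  sSup {z : ℝ | 1 ≤ z ∧ ∃ g : S → ℝ≥0∞, Measurable g ∧ (∀ x, 1 ≤ g x) ∧
    (∀ x, g x ≠ ⊤) ∧ (∀ x, Phi μ κ z g x = g x)}

namespace Stmt16Aux

lemma eexp_zero : eexp 0 = 1 := by simp [eexp]

lemma eexp_top : eexp ⊤ = ⊤ := by simp [eexp]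

lemma eexp_ofReal {r : ℝ} (hr : 0 ≤ r) :
    eexp (ENNReal.ofReal r) = ENNReal.ofReal (Real.exp r) := by
  rw [eexp, if_neg ENNReal.ofReal_ne_top, ENNReal.toReal_ofReal hr]

lemma one_le_eexp (t : ℝ≥0∞) : 1 ≤ eexp t := by
  by_cases ht : t = ⊤
  · simp [ht, eexp]
  · rw [eexp, if_neg ht]
    rw [← ENNReal.ofReal_one]
    exact ENNReal.ofReal_le_ofReal (Real.one_le_exp ENNReal.toReal_nonneg)

lemma le_eexp (t : ℝ≥0∞) : t ≤ eexp t := by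
  by_cases ht : t = ⊤
  · simp [ht, eexp]
  · rw [eexp, if_neg ht]
    calc t = ENNReal.ofReal t.toReal := (ENNReal.ofReal_toReal ht).symm
    _ ≤ _ := ENNReal.ofReal_le_ofReal
      (le_trans (le_add_of_nonneg_right zero_le_one) (Real.add_one_le_exp _))

lemma eexp_mono {t s : ℝ≥0∞} (h : t ≤ s) : eexp t ≤ eexp s := by
  by_cases hs : s = ⊤
  · simp [hs, eexp]
  · have ht : t ≠ ⊤ := fun h' => hs (top_le_iff.mp (h' ▸ h))
    rw [eexp, if_neg ht, eexp, if_neg hs]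
    exact ENNReal.ofReal_le_ofReal (Real.exp_le_exp.mpr (ENNReal.toReal_mono hs h))

lemma eexp_ne_top {t : ℝ≥0∞} (h : t ≠ ⊤) : eexp t ≠ ⊤ := by
  rw [eexp, if_neg h]; exact ENNReal.ofReal_ne_top

lemma eexp_eq_top {t : ℝ≥0∞} (h : eexp t = ⊤) : t = ⊤ := by
  by_contra ht; exact eexp_ne_top ht h

lemma eexp_iSup (u : ℕ → ℝ≥0∞) (hu : Monotone u) :
    eexp (⨆ n, u n) = ⨆ n, eexp (u n) := by
  refine le_antisymm ?_ (iSup_le fun n => eexp_mono (le_iSup u n))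
  by_cases hT : (⨆ n, u n) = ⊤
  · rw [hT, eexp_top]
    calc (⊤ : ℝ≥0∞) = ⨆ n, u n := hT.symm
    _ ≤ ⨆ n, eexp (u n) := iSup_mono fun n => le_eexp (u n)
  · set R := ⨆ n, eexp (u n) with hR
    by_cases hRtop : R = ⊤
    · rw [hRtop]; exact le_top
    have hfin : ∀ n, u n ≠ ⊤ := fun n h =>
      hT (top_le_iff.mp ((h ▸ le_iSup u n : (⊤:ℝ≥0∞) ≤ _)))
    have hRpos : 1 ≤ R := le_trans (one_le_eexp (u 0)) (le_iSup (fun n => eexp (u n)) 0)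
    have hRt : (1:ℝ) ≤ R.toReal := by
      rw [← ENNReal.toReal_one]; exact ENNReal.toReal_mono hRtop hRpos
    have hlog : ∀ n, (u n).toReal ≤ Real.log R.toReal := by
      intro n
      rw [Real.le_log_iff_exp_le (by linarith)]
      have h1 : eexp (u n) ≤ R := le_iSup (fun n => eexp (u n)) n
      rw [eexp, if_neg (hfin n)] at h1
      have := ENNReal.toReal_mono hRtop h1
      rwa [ENNReal.toReal_ofReal (Real.exp_nonneg _)] at this
    have hLnn : 0 ≤ Real.log R.toReal :=
      le_trans (by simpa using ENNReal.toReal_nonneg) (hlog 0)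
    have hT' : (⨆ n, u n) ≤ ENNReal.ofReal (Real.log R.toReal) := by
      refine iSup_le fun n => ?_
      rw [← ENNReal.ofReal_toReal (hfin n)]
      exact ENNReal.ofReal_le_ofReal (hlog n)
    rw [eexp, if_neg hT]
    have : (⨆ n, u n).toReal ≤ Real.log R.toReal := by
      refine le_trans (ENNReal.toReal_mono ENNReal.ofReal_ne_top hT') ?_
      rw [ENNReal.toReal_ofReal hLnn]
    calc ENNReal.ofReal (Real.exp (⨆ n, u n).toReal)
        ≤ ENNReal.ofReal (Real.exp (Real.log R.toReal)) :=
          ENNReal.ofReal_le_ofReal (Real.exp_le_exp.mpr this)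
    _ = ENNReal.ofReal R.toReal := by rw [Real.exp_log (by linarith)]
    _ = R := ENNReal.ofReal_toReal hRtop

variable {S : Type*} [MeasurableSpace S] [Countable S] [MeasurableSingletonClass S]

lemma Phi_mono_f {μ : Measure S} {κ : S → S → ℝ} {z : ℝ} {f g : S → ℝ≥0∞}
    (h : ∀ y, f y ≤ g y) (x : S) : Phi μ κ z f x ≤ Phi μ κ z g x :=
  mul_le_mul_right (eexp_mono (lintegral_mono fun y =>
    mul_le_mul_right (tsub_le_tsub_right (h y) 1) _)) _

lemma Phi_mono_meas {μ ν : Measure S} (h : μ ≤ ν) {κ : S → S → ℝ} {z : ℝ}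
    {f : S → ℝ≥0∞} (x : S) : Phi μ κ z f x ≤ Phi ν κ z f x :=
  mul_le_mul_right (eexp_mono (lintegral_mono' h le_rfl)) _

lemma Phi_mono_z {μ : Measure S} {κ : S → S → ℝ} {z z' : ℝ} (h : z ≤ z')
    {f : S → ℝ≥0∞} (x : S) : Phi μ κ z f x ≤ Phi μ κ z' f x :=
  mul_le_mul_left (ENNReal.ofReal_le_ofReal h) _

lemma one_le_Phi {μ : Measure S} {κ : S → S → ℝ} {z : ℝ} (hz : 1 ≤ z)
    {f : S → ℝ≥0∞} (x : S) : 1 ≤ Phi μ κ z f x := by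
  calc (1:ℝ≥0∞) = 1 * 1 := (one_mul 1).symm
  _ ≤ _ := mul_le_mul' (by rwa [ENNReal.one_le_ofReal]) (one_le_eexp _)

lemma Phi_ne_top {μ : Measure S} {κ : S → S → ℝ} {z : ℝ} {f : S → ℝ≥0∞} {x : S}
    (h : ∫⁻ y, ENNReal.ofReal (κ x y) * (f y - 1) ∂μ ≠ ⊤) : Phi μ κ z f x ≠ ⊤ :=
  ENNReal.mul_ne_top ENNReal.ofReal_ne_top (eexp_ne_top h)

/-- the iteration `f₀ = 1`, `f_{n+1} = Φ f_n`. -/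
noncomputable def iter (μ : Measure S) (κ : S → S → ℝ) (z : ℝ) : ℕ → S → ℝ≥0∞
  | 0 => fun _ => 1
  | n+1 => Phi μ κ z (iter μ κ z n)

lemma one_le_iter {μ : Measure S} {κ : S → S → ℝ} {z : ℝ} (hz : 1 ≤ z) :
    ∀ n x, 1 ≤ iter μ κ z n x
  | 0, x => le_rfl
  | (n+1), x => one_le_Phi hz x

lemma iter_mono_succ {μ : Measure S} {κ : S → S → ℝ} {z : ℝ} (hz : 1 ≤ z) :
    ∀ n x, iter μ κ z n x ≤ iter μ κ z (n+1) x
  | 0, x => one_le_Phi hz x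
  | (n+1), x => Phi_mono_f (iter_mono_succ hz n) x

lemma iter_mono_n {μ : Measure S} {κ : S → S → ℝ} {z : ℝ} (hz : 1 ≤ z)
    {n n' : ℕ} (h : n ≤ n') (x : S) : iter μ κ z n x ≤ iter μ κ z n' x := by
  induction n' with
  | zero => rw [Nat.le_zero.mp h]
  | succ k ih =>
      rcases Nat.lt_or_ge n (k+1) with h' | h'
      · exact le_trans (ih (Nat.lt_succ_iff.mp h')) (iter_mono_succ hz k x)
      · rw [Nat.le_antisymm h h']

lemma iter_le {μ ν : Measure S} {κ : S → S → ℝ} {z z' : ℝ} (hμν : μ ≤ ν)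
    (hzz' : z ≤ z') {g : S → ℝ≥0∞} (hg1 : ∀ x, 1 ≤ g x)
    (hfix : ∀ x, Phi ν κ z' g x ≤ g x) : ∀ n x, iter μ κ z n x ≤ g x
  | 0, x => hg1 x
  | (n+1), x =>
      le_trans (Phi_mono_f (iter_le hμν hzz' hg1 hfix n) x)
        (le_trans (Phi_mono_meas hμν x) (le_trans (Phi_mono_z hzz' x) (hfix x)))

lemma iter_mono_meas {μ ν : Measure S} (hμν : μ ≤ ν) {κ : S → S → ℝ} {z : ℝ} :
    ∀ n x, iter μ κ z n x ≤ iter ν κ z n x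
  | 0, _ => le_rfl
  | (n+1), x =>
      le_trans (Phi_mono_f (iter_mono_meas hμν n) x) (Phi_mono_meas hμν x)

/-- minimal candidate solution -/
noncomputable def minSol (μ : Measure S) (κ : S → S → ℝ) (z : ℝ) : S → ℝ≥0∞ :=
  fun x => ⨆ n, iter μ κ z n x

lemma one_le_minSol {μ : Measure S} {κ : S → S → ℝ} {z : ℝ} (hz : 1 ≤ z) (x : S) :
    1 ≤ minSol μ κ z x :=
  le_trans (one_le_iter hz 0 x) (le_iSup (fun n => iter μ κ z n x) 0)

lemma minSol_le {μ ν : Measure S} {κ : S → S → ℝ} {z z' : ℝ} (hμν : μ ≤ ν)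
    (hzz' : z ≤ z') {g : S → ℝ≥0∞} (hg1 : ∀ x, 1 ≤ g x)
    (hfix : ∀ x, Phi ν κ z' g x ≤ g x) (x : S) : minSol μ κ z x ≤ g x :=
  iSup_le fun n => iter_le hμν hzz' hg1 hfix n x

lemma minSol_mono_meas {μ ν : Measure S} (hμν : μ ≤ ν) {κ : S → S → ℝ} {z : ℝ}
    (x : S) : minSol μ κ z x ≤ minSol ν κ z x :=
  iSup_mono fun n => iter_mono_meas hμν n x

/-- Φ applied to a monotone sup -/
lemma Phi_iSup {μ : Measure S} {κ : S → S → ℝ} {z : ℝ} (F : ℕ → S → ℝ≥0∞)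
    (hF : ∀ n n', n ≤ n' → ∀ y, F n y ≤ F n' y) (x : S) :
    Phi μ κ z (fun y => ⨆ n, F n y) x = ⨆ n, Phi μ κ z (F n) x := by
  have hmono : Monotone (fun n => fun y => ENNReal.ofReal (κ x y) * (F n y - 1)) := by
    intro n n' h y
    exact mul_le_mul_right (tsub_le_tsub_right (hF n n' h y) 1) _
  have h1 : (∫⁻ y, ENNReal.ofReal (κ x y) * ((⨆ n, F n y) - 1) ∂μ)
      = ⨆ n, ∫⁻ y, ENNReal.ofReal (κ x y) * (F n y - 1) ∂μ := by
    rw [← lintegral_iSup (fun n => measurable_of_countable _) hmono]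
    exact lintegral_congr fun y => by rw [ENNReal.iSup_sub, ENNReal.mul_iSup]
  have h2 : Monotone (fun n => ∫⁻ y, ENNReal.ofReal (κ x y) * (F n y - 1) ∂μ) :=
    fun n n' h => lintegral_mono fun y => hmono h y
  show ENNReal.ofReal z * eexp _ = _
  rw [h1, eexp_iSup _ h2, ENNReal.mul_iSup]
  rfl

lemma minSol_fix {μ : Measure S} {κ : S → S → ℝ} {z : ℝ} (hz : 1 ≤ z) (x : S) :
    Phi μ κ z (minSol μ κ z) x = minSol μ κ z x := by
  calc Phi μ κ z (minSol μ κ z) x = ⨆ n, Phi μ κ z (iter μ κ z n) x :=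
        Phi_iSup (iter μ κ z) (fun n n' h y => iter_mono_n hz h y) x
  _ = ⨆ n, iter μ κ z (n+1) x := rfl
  _ = minSol μ κ z x :=
      le_antisymm (iSup_le fun n => le_iSup (fun n => iter μ κ z n x) (n+1))
        (iSup_mono fun n => iter_mono_succ hz n x)

/-- monotone convergence for set integrals over an increasing exhausting family. -/
lemma lintegral_exhaust {μ : Measure S} (A : ℕ → Set S) (hA : Monotone A)
    (hAU : ∀ y, ∃ k, y ∈ A k) (F : ℕ → S → ℝ≥0∞)
    (hF : ∀ k k', k ≤ k' → ∀ y, F k y ≤ F k' y) :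
    (⨆ k, ∫⁻ y in A k, F k y ∂μ) = ∫⁻ y, ⨆ k, F k y ∂μ := by
  have hmeas : ∀ k, MeasurableSet (A k) := fun k => (Set.to_countable (A k)).measurableSet
  have hmono : Monotone (fun k => (A k).indicator (F k)) := by
    intro k k' h y
    dsimp only
    by_cases hy : y ∈ A k
    · rw [Set.indicator_of_mem hy, Set.indicator_of_mem (hA h hy)]
      exact hF k k' h y
    · simp [Set.indicator_of_notMem hy]
  calc (⨆ k, ∫⁻ y in A k, F k y ∂μ) = ⨆ k, ∫⁻ y, (A k).indicator (F k) y ∂μ := by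
        refine iSup_congr fun k => ?_
        rw [lintegral_indicator (hmeas k)]
  _ = ∫⁻ y, ⨆ k, (A k).indicator (F k) y ∂μ :=
      (lintegral_iSup (fun k => measurable_of_countable _) hmono).symm
  _ = ∫⁻ y, ⨆ k, F k y ∂μ := by
      refine lintegral_congr fun y => ?_
      refine le_antisymm (iSup_mono fun k => Set.indicator_le_self _ _ y) (iSup_le fun k => ?_)
      obtain ⟨k₀, hk₀⟩ := hAU y
      calc F k y ≤ F (max k k₀) y := hF _ _ (le_max_left _ _) y
      _ = (A (max k k₀)).indicator (F (max k k₀)) y :=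
          (Set.indicator_of_mem (hA (le_max_right _ _) hk₀) _).symm
      _ ≤ ⨆ k, (A k).indicator (F k) y := le_iSup (fun k => (A k).indicator (F k) y) _

/-- a lower integral over a finite set of an a.e.-finite function is finite. -/
lemma lintegral_finset_ne_top {μ : Measure S} [IsFiniteMeasure μ] {A : Set S}
    (hA : A.Finite) {f : S → ℝ≥0∞} (hf : ∀ᵐ y ∂μ, f y ≠ ⊤) :
    ∫⁻ y in A, f y ∂μ ≠ ⊤ := by
  have h0 : μ {y | f y = ⊤} = 0 := by
    have := hf
    rw [MeasureTheory.ae_iff] at this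
    simpa [not_not] using this
  rw [lintegral_countable' f, tsum_eq_sum (s := hA.toFinset) ?h0]
  case h0 =>
    intro y hy
    have hyA : y ∉ A := fun h => hy (hA.mem_toFinset.mpr h)
    rw [Measure.restrict_apply (measurableSet_singleton y),
      Set.singleton_inter_eq_empty.mpr hyA, measure_empty, mul_zero]
  refine (ENNReal.sum_lt_top.mpr fun y _ => ?_).ne
  by_cases hy : f y = ⊤
  · have h1 : (μ.restrict A) {y} = 0 := by
      refine le_antisymm (le_trans (Measure.restrict_le_self _) ?_) (zero_le)
      exact le_trans (measure_mono (by simpa using hy)) (le_of_eq h0)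
    rw [h1, mul_zero]; exact ENNReal.zero_lt_top
  · exact ENNReal.mul_lt_top (lt_top_iff_ne_top.mpr hy) (measure_lt_top _ _)

/-- if `z ≥ 1` then `ENNReal.ofReal z ≠ 0`. -/
lemma ofReal_ne_zero_of_one_le {z : ℝ} (hz : 1 ≤ z) : ENNReal.ofReal z ≠ 0 :=
  (ENNReal.ofReal_pos.mpr (by linarith)).ne'

/-- key inequality satisfied by any a.e. fixed point. -/
lemma key_ineq {μ : Measure S} [IsProbabilityMeasure μ] {κ : S → S → ℝ} {b z : ℝ}
    (hb : 0 < b) (hbκ : ∀ x y, b ≤ κ x y) (hz : 1 ≤ z) (A : Set S) {g : S → ℝ≥0∞}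
    (hfix : ∀ᵐ x ∂μ, Phi (μ.restrict A) κ z g x = g x ∧ g x ≠ ⊤) :
    ∫⁻ y in A, (g y - 1) ∂μ ≠ ⊤ ∧
      (ENNReal.ofReal z * eexp (ENNReal.ofReal b * ∫⁻ y in A, (g y - 1) ∂μ) - 1) * μ A
        ≤ ∫⁻ y in A, (g y - 1) ∂μ := by
  set J := ∫⁻ y in A, (g y - 1) ∂μ with hJdef
  have hbJ : ∀ x, ENNReal.ofReal b * J ≤
      ∫⁻ y, ENNReal.ofReal (κ x y) * (g y - 1) ∂(μ.restrict A) := by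
    intro x
    rw [hJdef, ← lintegral_const_mul' _ _ ENNReal.ofReal_ne_top]
    exact lintegral_mono fun y => mul_le_mul_left (ENNReal.ofReal_le_ofReal (hbκ x y)) _
  obtain ⟨x₀, hx₀fix, hx₀fin⟩ := hfix.exists
  have hIx₀ : ∫⁻ y, ENNReal.ofReal (κ x₀ y) * (g y - 1) ∂(μ.restrict A) ≠ ⊤ := by
    intro hI
    apply hx₀fin
    rw [← hx₀fix]
    show ENNReal.ofReal z * eexp _ = ⊤
    rw [hI, eexp_top, ENNReal.mul_top (ofReal_ne_zero_of_one_le hz)]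
  have hJ : J ≠ ⊤ := by
    intro h
    apply hIx₀
    refine top_le_iff.mp (le_trans (le_of_eq ?_) (hbJ x₀))
    rw [h, ENNReal.mul_top (ENNReal.ofReal_pos.mpr hb).ne']
  refine ⟨hJ, ?_⟩
  have hae : ∀ᵐ x ∂μ, ENNReal.ofReal z * eexp (ENNReal.ofReal b * J) - 1 ≤ g x - 1 := by
    filter_upwards [hfix] with x hx
    refine tsub_le_tsub_right ?_ 1
    rw [← hx.1]
    exact mul_le_mul_right (eexp_mono (hbJ x)) _
  calc (ENNReal.ofReal z * eexp (ENNReal.ofReal b * J) - 1) * μ A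
      = ∫⁻ _ in A, (ENNReal.ofReal z * eexp (ENNReal.ofReal b * J) - 1) ∂μ :=
        (setLIntegral_const A _).symm
  _ ≤ ∫⁻ y in A, (g y - 1) ∂μ := lintegral_mono_ae (ae_restrict_of_ae hae)

/-- translate the key inequality to the reals. -/
lemma extract {b z : ℝ} (hb : 0 < b) (hz : 1 ≤ z) {J : ℝ≥0∞} (hJ : J ≠ ⊤) {m : ℝ≥0∞}
    (hm : m ≠ ⊤)
    (h : (ENNReal.ofReal z * eexp (ENNReal.ofReal b * J) - 1) * m ≤ J) :
    (z * Real.exp (b * J.toReal) - 1) * m.toReal ≤ J.toReal := by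
  have h1 : ENNReal.ofReal b * J = ENNReal.ofReal (b * J.toReal) := by
    rw [ENNReal.ofReal_mul hb.le, ENNReal.ofReal_toReal hJ]
  have hexp1 : (1:ℝ) ≤ z * Real.exp (b * J.toReal) := by
    have h2 : (1:ℝ) ≤ Real.exp (b * J.toReal) := Real.one_le_exp (by positivity)
    nlinarith
  refine (ENNReal.ofReal_le_ofReal_iff ENNReal.toReal_nonneg).mp ?_
  calc ENNReal.ofReal ((z * Real.exp (b * J.toReal) - 1) * m.toReal)
      = (ENNReal.ofReal z * eexp (ENNReal.ofReal b * J) - 1) * m := by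
        rw [ENNReal.ofReal_mul (by linarith), ENNReal.ofReal_sub _ zero_le_one,
          ENNReal.ofReal_toReal hm, ENNReal.ofReal_mul (by linarith : (0:ℝ) ≤ z),
          ENNReal.ofReal_one, ← eexp_ofReal (by positivity), ← h1]
  _ ≤ J := h
  _ = ENNReal.ofReal J.toReal := (ENNReal.ofReal_toReal hJ).symm

/-- bound on `z` from the key inequality. -/
lemma realZ {b m z t : ℝ} (hb : 0 < b) (hm : 0 < m) (ht : 0 ≤ t) (hz : 1 ≤ z)
    (h : (z * Real.exp (b * t) - 1) * m ≤ t) : z ≤ 1 + 1 / (m * b) := by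
  have he : b * t + 1 ≤ Real.exp (b * t) := Real.add_one_le_exp _
  have h1 : z * (1 + b * t) * m ≤ t + m := by
    nlinarith [mul_nonneg (mul_nonneg (by linarith : (0:ℝ) ≤ z) hm.le)
      (by linarith : (0:ℝ) ≤ Real.exp (b * t) - (b * t + 1))]
  have h2 : (0:ℝ) < 1 + b * t := by positivity
  have h3 : z ≤ (t + m) / (m * (1 + b * t)) := by
    rw [le_div_iff₀ (by positivity)]
    nlinarith
  refine le_trans h3 ?_
  rw [div_le_iff₀ (by positivity)]
  have h4 : (1 + 1 / (m * b)) * (m * (1 + b * t)) = m + m * b * t + 1 / b + t := by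
    field_simp
    ring
  rw [h4]
  have h5 : (0:ℝ) ≤ m * b * t := by positivity
  have h6 : (0:ℝ) < 1 / b := by positivity
  linarith

/-- bound on `t` from the key inequality. -/
lemma realJ {b m z t : ℝ} (hb : 0 < b) (hm : 0 < m) (ht : 0 ≤ t) (hz : 1 ≤ z)
    (h : (z * Real.exp (b * t) - 1) * m ≤ t) : t ≤ 4 / (m * b ^ 2) := by
  have he : b * t / 2 + 1 ≤ Real.exp (b * t / 2) := Real.add_one_le_exp _
  have hee : Real.exp (b * t) = Real.exp (b * t / 2) * Real.exp (b * t / 2) := by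
    rw [← Real.exp_add]; ring_nf
  have hq : (b * t / 2 + 1) * (b * t / 2 + 1) ≤ Real.exp (b * t) := by
    rw [hee]
    have h0 : (0:ℝ) ≤ b * t / 2 + 1 := by positivity
    exact mul_le_mul he he h0 (Real.exp_nonneg _)
  have hkey : m * (b^2 * t^2 / 4) ≤ t := by
    have e3 : (0:ℝ) ≤ (z - 1) * Real.exp (b * t) := mul_nonneg (by linarith) (Real.exp_nonneg _)
    have e5 : (0:ℝ) ≤ m * (b * t) := mul_nonneg hm.le (mul_nonneg hb.le ht)
    nlinarith [mul_le_mul_of_nonneg_left hq hm.le, e3, e5, mul_nonneg hm.le e3]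
  rcases eq_or_lt_of_le ht with h0 | h0
  · rw [← h0]; positivity
  · rw [le_div_iff₀ (by positivity)]
    have h5 : t * (m * b ^ 2) / 4 ≤ 1 := by
      have h6 := (div_le_div_iff_of_pos_right h0).mpr hkey
      rw [div_self h0.ne'] at h6
      calc t * (m * b ^ 2) / 4 = m * (b ^ 2 * t ^ 2 / 4) / t := by
            field_simp
      _ ≤ 1 := h6
    linarith

end Stmt16Aux

/-- the set whose supremum is `rstar`. -/
@[reducible] def solAE {S : Type*} [MeasurableSpace S] (μ : Measure S)
    (κ : S → S → ℝ) : Set ℝ :=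
  {z : ℝ | 1 ≤ z ∧ ∃ g : S → ℝ≥0∞, Measurable g ∧ (∀ x, 1 ≤ g x) ∧
    (∀ᵐ x ∂μ, g x ≠ ⊤) ∧ (∀ᵐ x ∂μ, Phi μ κ z g x = g x)}

/-- the set whose supremum is `rstarAll`. -/
@[reducible] def solAll {S : Type*} [MeasurableSpace S] (μ : Measure S)
    (κ : S → S → ℝ) : Set ℝ :=
  {z : ℝ | 1 ≤ z ∧ ∃ g : S → ℝ≥0∞, Measurable g ∧ (∀ x, 1 ≤ g x) ∧
    (∀ x, g x ≠ ⊤) ∧ (∀ x, Phi μ κ z g x = g x)}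

/-- the cutoff sets. -/
@[reducible] def ADs (S : Set ℕ) (D : ℕ) : Set S := {y : S | (y : ℕ) ≤ D}

open Stmt16Aux in
theorem stmt16 (S : Set ℕ) (hS : ∀ n ∈ S, 0 < n)
    (μ : Measure S) [IsProbabilityMeasure μ]
    (κ : S → S → ℝ) (hκmeas : Measurable (Function.uncurry κ))
    (hκsymm : ∀ x y, κ x y = κ y x) (hκpos : ∀ x y, 0 < κ x y)
    (hκinf : ∃ b : ℝ, 0 < b ∧ ∀ x y, b ≤ κ x y)
    (hκ2 : ∀ x, Integrable (fun y => κ x y ^ 2) μ)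
    (ψ : S → ℝ) (hψ : ∀ x, ψ x = Real.sqrt (∫ y, κ x y ^ 2 ∂μ))
    (a : ℝ) (ha : 0 < a)
    (hexp : Integrable (fun x => Real.exp (a * ψ x)) μ)
    (hnorm : opNorm μ κ < 1)
    (T1 : S → ℝ) (hT1 : ∀ x, T1 x = ∫ y, κ x y ∂μ)
    (hC : (∃ B : ℝ, ∀ x y, κ x y ≤ B) ∨
      ((∀ x x' y : S, (x : ℕ) ≤ (x' : ℕ) → κ x y ≤ κ x' y) ∧
       (∀ x y y' : S, (y : ℕ) ≤ (y' : ℕ) → κ x y ≤ κ x y') ∧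
       ∃ c₁ : ℝ, 0 < c₁ ∧ ∀ x y, κ x y ≤ c₁ * T1 x * T1 y))
    (M : ℕ → ℝ) (hM : ∀ D, M D = (μ {y : S | (y : ℕ) ≤ D}).toReal)
    (μhat : ℕ → Measure S)
    (hμhat : ∀ D,
      μhat D = (ENNReal.ofReal (M D))⁻¹ • μ.restrict {y : S | (y : ℕ) ≤ D})
    (rhat : ℕ → ℝ)
    (hrhat : ∀ D, rhat D = rstarAll (μhat D) (fun x y => M D * κ x y)) :
    (∀ D : ℕ, 0 < μ {y : S | (y : ℕ) ≤ D} → rstar μ κ ≤ rhat D) ∧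
    (∀ D D' : ℕ, D ≤ D' → 0 < μ {y : S | (y : ℕ) ≤ D} → rhat D' ≤ rhat D) ∧
    Tendsto rhat atTop (nhds (rstar μ κ)) := by
  obtain ⟨b, hb, hbκ⟩ := hκinf
  have hADmono : ∀ {D D' : ℕ}, D ≤ D' → ADs S D ⊆ ADs S D' := fun h y hy => le_trans hy h
  have hADfin : ∀ D, (ADs S D).Finite := fun D =>
    Set.Finite.preimage Subtype.val_injective.injOn (Set.finite_Iic D)
  have hrstar : rstar μ κ = sSup (solAE μ κ) := rfl
  -- Φ applied to constant 1 at z = 1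
  have hPhi1 : ∀ (ν : Measure S) (x : S), Phi ν κ 1 (fun _ => 1) x = 1 := by
    intro ν x
    show ENNReal.ofReal 1 * eexp (∫⁻ y, ENNReal.ofReal (κ x y) * ((1:ℝ≥0∞) - 1) ∂ν) = 1
    simp [tsub_self, eexp]
  have h1A : (1:ℝ) ∈ solAE μ κ :=
    ⟨le_rfl, fun _ => 1, measurable_of_countable _, fun _ => le_rfl,
      ae_of_all _ (fun _ => ENNReal.one_ne_top), ae_of_all _ (fun x => hPhi1 μ x)⟩
  have h1B : ∀ D, (1:ℝ) ∈ solAll (μ.restrict (ADs S D)) κ := fun D =>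
    ⟨le_rfl, fun _ => 1, measurable_of_countable _, fun _ => le_rfl,
      fun _ => ENNReal.one_ne_top, fun x => hPhi1 _ x⟩
  -- rewriting `rhat` via the restricted measure
  have hPhihat : ∀ (D : ℕ), 0 < μ (ADs S D) → ∀ (z : ℝ) (f : S → ℝ≥0∞) (x : S),
      Phi (μhat D) (fun x y => M D * κ x y) z f x = Phi (μ.restrict (ADs S D)) κ z f x := by
    intro D hpos z f x
    have hMpos : 0 < M D := by
      rw [hM D]; exact ENNReal.toReal_pos hpos.ne' (measure_ne_top μ _)
    have hc0 : ENNReal.ofReal (M D) ≠ 0 := (ENNReal.ofReal_pos.mpr hMpos).ne'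
    show ENNReal.ofReal z * eexp (∫⁻ y, ENNReal.ofReal (M D * κ x y) * (f y - 1) ∂(μhat D)) = _
    rw [hμhat D, lintegral_smul_measure]
    have h2 : ∫⁻ y, ENNReal.ofReal (M D * κ x y) * (f y - 1) ∂(μ.restrict (ADs S D))
        = ENNReal.ofReal (M D) * ∫⁻ y, ENNReal.ofReal (κ x y) * (f y - 1) ∂(μ.restrict (ADs S D)) := by
      rw [← lintegral_const_mul' _ _ ENNReal.ofReal_ne_top]
      refine lintegral_congr fun y => ?_
      rw [ENNReal.ofReal_mul hMpos.le, mul_assoc]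
    rw [h2, smul_eq_mul, ← mul_assoc, ENNReal.inv_mul_cancel hc0 ENNReal.ofReal_ne_top, one_mul]
    rfl
  have hrhat_eq : ∀ D, 0 < μ (ADs S D) → rhat D = sSup (solAll (μ.restrict (ADs S D)) κ) := by
    intro D hpos
    rw [hrhat D]
    show sSup _ = sSup _
    congr 1
    ext z
    constructor
    · rintro ⟨hz, g, hgm, hg1, hgf, hgfix⟩
      exact ⟨hz, g, hgm, hg1, hgf, fun x => by
        rw [← hPhihat D hpos z g x]; exact hgfix x⟩
    · rintro ⟨hz, g, hgm, hg1, hgf, hgfix⟩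
      exact ⟨hz, g, hgm, hg1, hgf, fun x => by
        rw [hPhihat D hpos z g x]; exact hgfix x⟩
  -- the gadget: a dominated supersolution yields membership in `solAll (μ.restrict (ADs S D)) κ`
  have hgadget : ∀ (D : ℕ) (z : ℝ), 1 ≤ z →
      (∃ g : S → ℝ≥0∞, (∀ x, 1 ≤ g x) ∧ (∀ᵐ x ∂μ, g x ≠ ⊤) ∧
        (∀ x, Phi (μ.restrict (ADs S D)) κ z g x ≤ g x)) → z ∈ solAll (μ.restrict (ADs S D)) κ := by
    rintro D z hz ⟨g, hg1, hgf, hgle⟩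
    have hmle : ∀ x, minSol (μ.restrict (ADs S D)) κ z x ≤ g x :=
      minSol_le le_rfl le_rfl hg1 hgle
    have hmfix : ∀ x, Phi (μ.restrict (ADs S D)) κ z (minSol (μ.restrict (ADs S D)) κ z) x
        = minSol (μ.restrict (ADs S D)) κ z x := minSol_fix hz
    have hmaef : ∀ᵐ x ∂μ, minSol (μ.restrict (ADs S D)) κ z x ≠ ⊤ := by
      filter_upwards [hgf] with x hx
      exact fun h => hx (top_le_iff.mp (h ▸ hmle x))
    have hmfin : ∀ x, minSol (μ.restrict (ADs S D)) κ z x ≠ ⊤ := by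
      intro x
      rw [← hmfix x]
      refine Phi_ne_top ?_
      refine lintegral_finset_ne_top (hADfin D) ?_
      filter_upwards [hmaef] with y hy
      exact ENNReal.mul_ne_top ENNReal.ofReal_ne_top
        (fun h => hy (top_le_iff.mp (h ▸ tsub_le_self)))
    exact ⟨hz, minSol (μ.restrict (ADs S D)) κ z, measurable_of_countable _,
      fun x => one_le_minSol hz x, hmfin, hmfix⟩
  -- transfer of solutions from `solAE μ κ` to `solAll (μ.restrict (ADs S D)) κ`
  have hAtoB : ∀ D, ∀ z ∈ solAE μ κ, z ∈ solAll (μ.restrict (ADs S D)) κ := by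
    rintro D z ⟨hz, g, hgm, hg1, hgf, hgfix⟩
    set g' : S → ℝ≥0∞ := Phi μ κ z g with hg'def
    have hg'ae : ∀ᵐ x ∂μ, g' x = g x := hgfix
    have hg'fix : ∀ x, Phi μ κ z g' x = g' x := by
      intro x
      show ENNReal.ofReal z * eexp (∫⁻ y, ENNReal.ofReal (κ x y) * (g' y - 1) ∂μ) = g' x
      have h3 : ∫⁻ y, ENNReal.ofReal (κ x y) * (g' y - 1) ∂μ
          = ∫⁻ y, ENNReal.ofReal (κ x y) * (g y - 1) ∂μ :=
        lintegral_congr_ae (by filter_upwards [hg'ae] with y hy; rw [hy])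
      rw [h3]
      rfl
    refine hgadget D z hz ⟨g', fun x => one_le_Phi hz x, ?_, fun x => ?_⟩
    · filter_upwards [hg'ae, hgf] with x h1 h2
      rw [h1]; exact h2
    · calc Phi (μ.restrict (ADs S D)) κ z g' x ≤ Phi μ κ z g' x :=
            Phi_mono_meas Measure.restrict_le_self x
      _ = g' x := hg'fix x
  have hBanti : ∀ D D', D ≤ D' → ∀ z ∈ solAll (μ.restrict (ADs S D')) κ, z ∈ solAll (μ.restrict (ADs S D)) κ := by
    rintro D D' hDD' z ⟨hz, g, hgm, hg1, hgf, hgfix⟩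
    refine hgadget D z hz ⟨g, hg1, ae_of_all _ hgf, fun x => ?_⟩
    calc Phi (μ.restrict (ADs S D)) κ z g x ≤ Phi (μ.restrict (ADs S D')) κ z g x :=
          Phi_mono_meas (Measure.restrict_mono (hADmono hDD') le_rfl) x
    _ = g x := hgfix x
  have hBdown : ∀ D (z z' : ℝ), 1 ≤ z → z ≤ z' → z' ∈ solAll (μ.restrict (ADs S D)) κ → z ∈ solAll (μ.restrict (ADs S D)) κ := by
    rintro D z z' hz hzz' ⟨hz', g, hgm, hg1, hgf, hgfix⟩
    refine hgadget D z hz ⟨g, hg1, ae_of_all _ hgf, fun x => ?_⟩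
    calc Phi (μ.restrict (ADs S D)) κ z g x ≤ Phi (μ.restrict (ADs S D)) κ z' g x :=
          Phi_mono_z hzz' x
    _ = g x := hgfix x
  -- upper bounds
  have hBbdd : ∀ D, 0 < μ (ADs S D) → BddAbove (solAll (μ.restrict (ADs S D)) κ) := by
    intro D hpos
    refine ⟨1 + 1 / ((μ (ADs S D)).toReal * b), ?_⟩
    rintro z ⟨hz, g, hgm, hg1, hgf, hgfix⟩
    have hki := key_ineq hb hbκ hz (ADs S D) (g := g)
      (ae_of_all _ (fun x => ⟨hgfix x, hgf x⟩))
    have hr := extract hb hz hki.1 (measure_ne_top μ _) hki.2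
    exact realZ hb (ENNReal.toReal_pos hpos.ne' (measure_ne_top μ _))
      ENNReal.toReal_nonneg hz hr
  have hAbdd : BddAbove (solAE μ κ) := by
    refine ⟨1 + 1 / ((μ (Set.univ : Set S)).toReal * b), ?_⟩
    rintro z ⟨hz, g, hgm, hg1, hgf, hgfix⟩
    have hfix' : ∀ᵐ x ∂μ, Phi (μ.restrict Set.univ) κ z g x = g x ∧ g x ≠ ⊤ := by
      rw [Measure.restrict_univ]
      exact hgfix.and hgf
    have hki := key_ineq hb hbκ hz Set.univ hfix'
    have hr := extract hb hz hki.1 (measure_ne_top μ _) hki.2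
    refine realZ hb ?_ ENNReal.toReal_nonneg hz hr
    rw [measure_univ]
    norm_num
  -- the two first claims
  have hc1 : ∀ D, 0 < μ (ADs S D) → rstar μ κ ≤ rhat D := by
    intro D hpos
    rw [hrstar, hrhat_eq D hpos]
    exact csSup_le_csSup (hBbdd D hpos) ⟨1, h1A⟩ (fun z hzA => hAtoB D z hzA)
  have hc2 : ∀ D D', D ≤ D' → 0 < μ (ADs S D) → rhat D' ≤ rhat D := by
    intro D D' hDD' hpos
    have hpos' : 0 < μ (ADs S D') := lt_of_lt_of_le hpos (measure_mono (hADmono hDD'))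
    rw [hrhat_eq D hpos, hrhat_eq D' hpos']
    exact csSup_le_csSup (hBbdd D hpos) ⟨1, h1B D'⟩ (hBanti D D' hDD')
  refine ⟨hc1, hc2, ?_⟩
  -- claim 3
  have hD₀ex : ∃ D₀, 0 < μ (ADs S D₀) := by
    by_contra hcon
    push_neg at hcon
    have hz0 : ∀ D, μ (ADs S D) = 0 := fun D => le_antisymm (hcon D) (zero_le)
    have huniv : (Set.univ : Set S) = ⋃ D, ADs S D := by
      ext y
      simp only [Set.mem_univ, Set.mem_iUnion, true_iff]
      exact ⟨(y : ℕ), show (y:ℕ) ≤ (y:ℕ) from le_rfl⟩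
    have h0 : μ Set.univ = 0 := by rw [huniv]; exact measure_iUnion_null hz0
    rw [measure_univ] at h0
    exact one_ne_zero h0
  obtain ⟨D₀, hD₀⟩ := hD₀ex
  have hposk : ∀ k, 0 < μ (ADs S (D₀ + k)) := fun k =>
    lt_of_lt_of_le hD₀ (measure_mono (hADmono (Nat.le_add_right _ _)))
  have hcover : ∀ y : S, ∃ k, y ∈ ADs S (D₀ + k) := fun y => ⟨(y : ℕ), show (y:ℕ) ≤ D₀ + (y:ℕ) from Nat.le_add_left _ _⟩
  have hexmono : ∀ {k k' : ℕ}, k ≤ k' → ADs S (D₀ + k) ⊆ ADs S (D₀ + k') :=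
    fun h => hADmono (Nat.add_le_add_left h D₀)
  -- core: uniform control of the minimal solutions
  have hlim_core : ∀ z : ℝ, 1 ≤ z → (∀ k, z ∈ solAll (μ.restrict (ADs S (D₀ + k))) κ) → z ∈ solAE μ κ := by
    intro z hz hmem
    set m : ℕ → S → ℝ≥0∞ := fun k => minSol (μ.restrict (ADs S (D₀ + k))) κ z with hmdef
    have hresmono : ∀ {k k' : ℕ}, k ≤ k' →
        μ.restrict (ADs S (D₀ + k)) ≤ μ.restrict (ADs S (D₀ + k')) :=
      fun h => Measure.restrict_mono (hexmono h) le_rfl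
    have hmmono : ∀ k k', k ≤ k' → ∀ x, m k x ≤ m k' x := fun k k' h x =>
      minSol_mono_meas (hresmono h) x
    have hmfix : ∀ k x, Phi (μ.restrict (ADs S (D₀ + k))) κ z (m k) x = m k x :=
      fun k => minSol_fix hz
    have hm1 : ∀ k x, 1 ≤ m k x := fun k => one_le_minSol hz
    have hmfin : ∀ k x, m k x ≠ ⊤ := by
      intro k x
      obtain ⟨hz', g, hgm, hg1, hgf, hgfix⟩ := hmem k
      have hle := minSol_le le_rfl le_rfl hg1 (fun x => le_of_eq (hgfix x)) x
      exact fun h => hgf x (top_le_iff.mp (h ▸ hle))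
    set h : S → ℝ≥0∞ := fun x => ⨆ k, m k x with hhdef
    have hIeq : ∀ x, ∫⁻ y, ENNReal.ofReal (κ x y) * (h y - 1) ∂μ
        = ⨆ k, ∫⁻ y, ENNReal.ofReal (κ x y) * (m k y - 1) ∂(μ.restrict (ADs S (D₀ + k))) := by
      intro x
      calc ∫⁻ y, ENNReal.ofReal (κ x y) * (h y - 1) ∂μ
          = ∫⁻ y, ⨆ k, ENNReal.ofReal (κ x y) * (m k y - 1) ∂μ := by
            refine lintegral_congr fun y => ?_
            show ENNReal.ofReal (κ x y) * ((⨆ k, m k y) - 1) = _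
            rw [ENNReal.iSup_sub, ENNReal.mul_iSup]
      _ = ⨆ k, ∫⁻ y in ADs S (D₀ + k), ENNReal.ofReal (κ x y) * (m k y - 1) ∂μ :=
          (lintegral_exhaust (fun k => ADs S (D₀ + k)) (fun k k' hk => hexmono hk) hcover
            (fun k y => ENNReal.ofReal (κ x y) * (m k y - 1))
            (fun k k' hk y =>
              mul_le_mul_right (tsub_le_tsub_right (hmmono k k' hk y) 1) _)).symm
    have hmonoI : ∀ x, Monotone (fun k =>
        ∫⁻ y, ENNReal.ofReal (κ x y) * (m k y - 1) ∂(μ.restrict (ADs S (D₀ + k)))) := by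
      intro x k k' hk
      refine lintegral_mono' (hresmono hk) fun y => ?_
      exact mul_le_mul_right (tsub_le_tsub_right (hmmono k k' hk y) 1) _
    have hfixh : ∀ x, Phi μ κ z h x = h x := by
      intro x
      show ENNReal.ofReal z * eexp (∫⁻ y, ENNReal.ofReal (κ x y) * (h y - 1) ∂μ) = h x
      rw [hIeq x, eexp_iSup _ (hmonoI x), ENNReal.mul_iSup]
      exact iSup_congr fun k => hmfix k x
    -- uniform J-bound
    have hm₀pos : 0 < (μ (ADs S D₀)).toReal :=
      ENNReal.toReal_pos hD₀.ne' (measure_ne_top μ _)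
    have hJbound : ∀ k, ∫⁻ y in ADs S (D₀ + k), (m k y - 1) ∂μ
        ≤ ENNReal.ofReal (4 / ((μ (ADs S D₀)).toReal * b ^ 2)) := by
      intro k
      have hki := key_ineq hb hbκ hz (ADs S (D₀ + k)) (g := m k)
        (ae_of_all _ fun x => ⟨hmfix k x, hmfin k x⟩)
      have hki2 : (ENNReal.ofReal z * eexp (ENNReal.ofReal b *
            ∫⁻ y in ADs S (D₀ + k), (m k y - 1) ∂μ) - 1) * μ (ADs S D₀)
          ≤ ∫⁻ y in ADs S (D₀ + k), (m k y - 1) ∂μ :=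
        le_trans (mul_le_mul_right (measure_mono (hADmono (Nat.le_add_right D₀ k))) _) hki.2
      have hr := extract hb hz hki.1 (measure_ne_top μ (ADs S D₀)) hki2
      have hrj := realJ hb hm₀pos ENNReal.toReal_nonneg hz hr
      calc ∫⁻ y in ADs S (D₀ + k), (m k y - 1) ∂μ
          = ENNReal.ofReal (∫⁻ y in ADs S (D₀ + k), (m k y - 1) ∂μ).toReal :=
            (ENNReal.ofReal_toReal hki.1).symm
      _ ≤ _ := ENNReal.ofReal_le_ofReal hrj
    have hhint : ∫⁻ y, (h y - 1) ∂μ ≤ ENNReal.ofReal (4 / ((μ (ADs S D₀)).toReal * b ^ 2)) := by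
      calc ∫⁻ y, (h y - 1) ∂μ = ∫⁻ y, ⨆ k, (m k y - 1) ∂μ := by
            refine lintegral_congr fun y => ?_
            show (⨆ k, m k y) - 1 = _
            rw [ENNReal.iSup_sub]
      _ = ⨆ k, ∫⁻ y in ADs S (D₀ + k), (m k y - 1) ∂μ :=
          (lintegral_exhaust (fun k => ADs S (D₀ + k)) (fun k k' hk => hexmono hk) hcover
            (fun k y => m k y - 1)
            (fun k k' hk y => tsub_le_tsub_right (hmmono k k' hk y) 1)).symm
      _ ≤ _ := iSup_le hJbound
    have hhaef : ∀ᵐ x ∂μ, h x ≠ ⊤ := by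
      have hne : ∫⁻ y, (h y - 1) ∂μ ≠ ⊤ :=
        (lt_of_le_of_lt hhint ENNReal.ofReal_lt_top).ne
      filter_upwards [ae_lt_top (measurable_of_countable _) hne] with x hx
      intro hxt
      rw [hxt] at hx
      simp at hx
    exact ⟨hz, h, measurable_of_countable _,
      fun x => le_trans (hm1 0 x) (le_iSup (fun k => m k x) 0), hhaef, ae_of_all _ hfixh⟩
  -- convergence
  have hubs : ∀ k, rstar μ κ ≤ rhat (D₀ + k) := fun k => hc1 _ (hposk k)
  have hant : Antitone fun k => rhat (D₀ + k) := fun k k' hk =>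
    hc2 (D₀ + k) (D₀ + k') (Nat.add_le_add_left hk D₀) (hposk k)
  have hbddb : BddBelow (Set.range fun k => rhat (D₀ + k)) :=
    ⟨rstar μ κ, by rintro r ⟨k, rfl⟩; exact hubs k⟩
  have htend : Tendsto (fun k => rhat (D₀ + k)) atTop (nhds (⨅ k, rhat (D₀ + k))) :=
    tendsto_atTop_ciInf hant hbddb
  have hrL : rstar μ κ ≤ ⨅ k, rhat (D₀ + k) := le_ciInf hubs
  have hLr : (⨅ k, rhat (D₀ + k)) ≤ rstar μ κ := by
    by_contra hcon
    push_neg at hcon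
    set L := ⨅ k, rhat (D₀ + k) with hLdef
    set z := (rstar μ κ + L) / 2 with hzdef
    have h1r : 1 ≤ rstar μ κ := by rw [hrstar]; exact le_csSup hAbdd h1A
    have hz1 : 1 ≤ z := by rw [hzdef]; linarith
    have hzrs : rstar μ κ < z := by rw [hzdef]; linarith
    have hzL : z < L := by rw [hzdef]; linarith
    have hmem : ∀ k, z ∈ solAll (μ.restrict (ADs S (D₀ + k))) κ := by
      intro k
      have hlt : z < sSup (solAll (μ.restrict (ADs S (D₀ + k))) κ) := by
        rw [← hrhat_eq _ (hposk k)]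
        exact lt_of_lt_of_le hzL (ciInf_le hbddb k)
      obtain ⟨z', hz'mem, hzz'⟩ := exists_lt_of_lt_csSup ⟨1, h1B _⟩ hlt
      exact hBdown _ z z' hz1 hzz'.le hz'mem
    have hzA : z ∈ solAE μ κ := hlim_core z hz1 hmem
    have : z ≤ rstar μ κ := by rw [hrstar]; exact le_csSup hAbdd hzA
    linarith
  have hLeq : (⨅ k, rhat (D₀ + k)) = rstar μ κ := le_antisymm hLr hrL
  rw [hLeq] at htend
  have hfe : (fun k => rhat (D₀ + k)) = fun k => rhat (k + D₀) :=
    funext fun k => by rw [Nat.add_comm]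
  rw [hfe] at htend
  exact (tendsto_add_atTop_iff_nat D₀).mp htend
end
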